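/- arXiv:1605.01009 — 8 statements merged into one kernel-verified Lean document; each statement's English description precedes it below -/
import Mathlib

section
/- Let n ≥ 1 and let X, Y be real n×n matrices. Assume that Y is symmetric and invertible and that, counted with multiplicity, exactly one eigenvalue of Y is negative and the remaining n−1 eigenvalues are positive. Assume also that the symmetric part (X + Xᵀ)/2 is positive definite. Then the product XY has exactly one negative real eigenvalue with one-dimensional eigenspace; precisely: (i) there exist μ > 0 and a nonzero vector u ∈ ℝⁿ with (XY)u = −μu, and (ii) there do not exist linearly independent vectors u, w ∈ ℝⁿ and reals a, b > 0 with (XY)u = −au and (XY)w = −bw. -/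
open Matrix

lemma aux_dot_symm {n : ℕ} (X : Matrix (Fin n) (Fin n) ℝ) (v : Fin n → ℝ) :
    v ⬝ᵥ (((1/2 : ℝ) • (X + Xᵀ)) *ᵥ v) = v ⬝ᵥ (X *ᵥ v) := by
  have h : v ⬝ᵥ (Xᵀ *ᵥ v) = v ⬝ᵥ (X *ᵥ v) := by
    rw [mulVec_transpose, dotProduct_comm, ← dotProduct_mulVec]
  rw [smul_mulVec, dotProduct_smul, add_mulVec, dotProduct_add, h, smul_eq_mul]
  ring

lemma quad_nonpos (a b α β δ Buu Bww Buw s t : ℝ) (ha : 0 < a) (hb : 0 < b)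
    (hα : 0 < α) (hβ : 0 < β) (h1 : a * Buu = -α) (h2 : b * Bww = -β)
    (h3 : (a + b) * Buw = -δ) (hd : δ ^ 2 ≤ 4 * (β * α)) :
    s ^ 2 * Buu + 2 * (s * t) * Buw + t ^ 2 * Bww ≤ 0 := by
  have hab : 0 < a + b := by linarith
  have habp : 0 < a * b * (a + b) := by positivity
  have eBuu : Buu = -(α / a) := by field_simp; linarith
  have eBww : Bww = -(β / b) := by field_simp; linarith
  have eBuw : Buw = -(δ / (a + b)) := by field_simp; linarith
  subst eBuu eBww eBuw
  have key : 0 ≤ s ^ 2 * α * b * (a + b) + 2 * (s * t) * δ * (a * b) + t ^ 2 * β * a * (a + b) := by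
    nlinarith [sq_nonneg (s * δ + 2 * t * β), sq_nonneg (b * s * δ + 2 * a * t * β),
      mul_nonneg (mul_nonneg (mul_nonneg (sq_nonneg s) hb.le) hab.le)
        (by linarith : (0:ℝ) ≤ 4 * (β * α) - δ ^ 2),
      mul_pos ha hb, hβ.le]
  have heq : s ^ 2 * (-(α / a)) + 2 * (s * t) * (-(δ / (a + b))) + t ^ 2 * (-(β / b))
      = -((s ^ 2 * α * b * (a + b) + 2 * (s * t) * δ * (a * b) + t ^ 2 * β * a * (a + b))
          / (a * b * (a + b))) := by
    field_simp
    ring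
  rw [heq]
  exact neg_nonpos.mpr (div_nonneg key habp.le)

lemma det_pos_aux' {n : ℕ} (X S : Matrix (Fin n) (Fin n) ℝ)
    (hS : S.PosDef) (hvX : ∀ v, v ⬝ᵥ (X *ᵥ v) = v ⬝ᵥ (S *ᵥ v)) : 0 < X.det := by
  set f := fun t : ℝ => ((1 - t) • S + t • X).det with hf
  have hSpos : ∀ v : Fin n → ℝ, v ≠ 0 → 0 < v ⬝ᵥ (S *ᵥ v) := fun v hv => by
    simpa using hS.dotProduct_mulVec_pos hv
  have hne : ∀ t : ℝ, f t ≠ 0 := by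
    intro t hdet
    obtain ⟨v, hv0, hv⟩ := Matrix.exists_mulVec_eq_zero_iff.2 hdet
    have h1 : v ⬝ᵥ (((1 - t) • S + t • X) *ᵥ v) = 0 := by rw [hv]; simp
    rw [add_mulVec, smul_mulVec, smul_mulVec, dotProduct_add,
      dotProduct_smul, dotProduct_smul, smul_eq_mul, smul_eq_mul, hvX v] at h1
    have := hSpos v hv0
    nlinarith
  have hcont : Continuous f :=
    Continuous.matrix_det (((continuous_const.sub continuous_id).smul continuous_const).add
      (continuous_id.smul continuous_const))
  by_contra h
  push_neg at h
  have hf1 : f 1 = X.det := by simp [hf]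
  have hf0 : f 0 = S.det := by simp [hf]
  have hX0 : X.det < 0 := lt_of_le_of_ne h (by rw [← hf1]; exact hne 1)
  have hS0 : 0 < S.det := hS.det_pos
  obtain ⟨t, _, ht⟩ := intermediate_value_Icc' zero_le_one hcont.continuousOn
    (show (0:ℝ) ∈ Set.Icc (f 1) (f 0) from
      Set.mem_Icc.2 ⟨by rw [hf1]; exact hX0.le, by rw [hf0]; exact hS0.le⟩)
  exact hne t ht

lemma exists_neg_eig {n : ℕ} (M : Matrix (Fin n) (Fin n) ℝ) (hdet : M.det < 0) :
    ∃ (μ : ℝ) (u : Fin n → ℝ), 0 < μ ∧ u ≠ 0 ∧ M *ᵥ u = (-μ) • u := by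
  set q := fun t : ℝ => (t • (1 : Matrix (Fin n) (Fin n) ℝ) + M).det with hq
  have hqcont : Continuous q :=
    Continuous.matrix_det ((continuous_id.smul continuous_const).add continuous_const)
  set g := fun s : ℝ => ((1 : Matrix (Fin n) (Fin n) ℝ) + s • M).det with hgdef
  have hg : Continuous g :=
    Continuous.matrix_det (continuous_const.add (continuous_id.smul continuous_const))
  have hg0 : g 0 = 1 := by simp [hgdef]
  have h1 : ∀ᶠ s in nhds (0:ℝ), 0 < g s := by
    have ht : Filter.Tendsto g (nhds 0) (nhds (g 0)) := hg.continuousAt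
    rw [hg0] at ht
    exact ht.eventually (eventually_gt_nhds one_pos)
  have h2 : ∀ᶠ s in nhdsWithin (0:ℝ) (Set.Ioi 0), 0 < g s ∧ s ∈ Set.Ioi (0:ℝ) :=
    (h1.filter_mono nhdsWithin_le_nhds).and self_mem_nhdsWithin
  obtain ⟨s, hgs, hs0⟩ := h2.exists
  replace hs0 : 0 < s := hs0
  have hT : 0 < q (1/s) := by
    have hmat : (1/s) • (1 : Matrix (Fin n) (Fin n) ℝ) + M
        = (1/s) • ((1 : Matrix (Fin n) (Fin n) ℝ) + s • M) := by
      rw [smul_add, smul_smul, one_div, inv_mul_cancel₀ hs0.ne', one_smul]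
    rw [hq]
    simp only
    rw [hmat, det_smul]
    exact mul_pos (pow_pos (by positivity) _) hgs
  have hq0 : q 0 < 0 := by simpa [hq] using hdet
  obtain ⟨t, htmem, ht⟩ := intermediate_value_Icc (by positivity : (0:ℝ) ≤ 1/s)
    hqcont.continuousOn (Set.mem_Icc.2 ⟨hq0.le, hT.le⟩)
  have ht0 : 0 < t := by
    rcases lt_or_eq_of_le htmem.1 with h | h
    · exact h
    · exact absurd ht (by rw [← h]; exact hq0.ne)
  obtain ⟨v, hv0, hv⟩ := Matrix.exists_mulVec_eq_zero_iff.2 ht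
  refine ⟨t, v, ht0, hv0, ?_⟩
  rw [add_mulVec, smul_mulVec, one_mulVec] at hv
  rw [eq_neg_of_add_eq_zero_right hv, neg_smul]

/-- Generalization of Sylvester's law of inertia (Appendix lemma):
if `Y` is symmetric, invertible, with exactly one negative eigenvalue and `n-1`
positive eigenvalues, and the symmetric part of `X` is positive definite, then
`X * Y` has exactly one negative real eigenvalue, with a one-dimensional eigenspace. -/
theorem one_negative_eigenvalue_of_prod {n : ℕ} (hn : 1 ≤ n)
    (X Y : Matrix (Fin n) (Fin n) ℝ)
    (hYsymm : Y.IsSymm) (hYinv : IsUnit Y.det)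
    (hYspec : ∃ (P : Matrix (Fin n) (Fin n) ℝ) (μ : Fin n → ℝ) (i₀ : Fin n),
      Pᵀ * P = 1 ∧ Y = Pᵀ * Matrix.diagonal μ * P ∧ μ i₀ < 0 ∧ ∀ i, i ≠ i₀ → 0 < μ i)
    (hX : ((1/2 : ℝ) • (X + Xᵀ)).PosDef) :
    (∃ (μ : ℝ) (u : Fin n → ℝ), 0 < μ ∧ u ≠ 0 ∧ (X * Y) *ᵥ u = (-μ) • u) ∧
    ¬ ∃ (u w : Fin n → ℝ) (a b : ℝ), LinearIndependent ℝ ![u, w] ∧ 0 < a ∧ 0 < b ∧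
      (X * Y) *ᵥ u = (-a) • u ∧ (X * Y) *ᵥ w = (-b) • w := by
  obtain ⟨P, μ, i₀, hP, hY, hμneg, hμpos⟩ := hYspec
  have hYt : Yᵀ = Y := hYsymm
  -- symmetry of the bilinear form of Y
  have hBsymm : ∀ p q : Fin n → ℝ, p ⬝ᵥ (Y *ᵥ q) = q ⬝ᵥ (Y *ᵥ p) := by
    intro p q
    rw [dotProduct_mulVec, ← mulVec_transpose, hYt, dotProduct_comm]
  -- positivity of the form v ↦ v X v on images of Y
  have hpos : ∀ p : Fin n → ℝ, p ≠ 0 → 0 < (Y *ᵥ p) ⬝ᵥ (X *ᵥ (Y *ᵥ p)) := by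
    intro p hp
    have hYp : Y *ᵥ p ≠ 0 := by
      intro h0
      apply hp
      have h1 : Y⁻¹ *ᵥ (Y *ᵥ p) = (Y⁻¹ * Y) *ᵥ p := mulVec_mulVec _ _ _
      rw [Matrix.nonsing_inv_mul Y hYinv, one_mulVec, h0, mulVec_zero] at h1
      exact h1.symm
    have h2 : 0 < (Y *ᵥ p) ⬝ᵥ (((1/2 : ℝ) • (X + Xᵀ)) *ᵥ (Y *ᵥ p)) := by
      simpa using hX.dotProduct_mulVec_pos hYp
    rwa [aux_dot_symm] at h2
  constructor
  · -- existence of a negative eigenvalue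
    have hdetX : 0 < X.det :=
      det_pos_aux' X ((1/2 : ℝ) • (X + Xᵀ)) hX (fun v => (aux_dot_symm X v).symm)
    have hPP : P.det * P.det = 1 := by
      have := congrArg Matrix.det hP
      rwa [det_mul, det_transpose, det_one] at this
    have hdetD : (Matrix.diagonal μ).det < 0 := by
      rw [det_diagonal]
      have hprod : 0 < ∏ i ∈ Finset.univ.erase i₀, μ i :=
        Finset.prod_pos (fun i hi => hμpos i (Finset.mem_erase.1 hi).1)
      rw [← Finset.mul_prod_erase Finset.univ μ (Finset.mem_univ i₀)]
      exact mul_neg_of_neg_of_pos hμneg hprod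
    have hdetY : Y.det < 0 := by
      have : Y.det = (Matrix.diagonal μ).det := by
        rw [hY, det_mul, det_mul, det_transpose]
        calc P.det * (Matrix.diagonal μ).det * P.det
            = (Matrix.diagonal μ).det * (P.det * P.det) := by ring
          _ = (Matrix.diagonal μ).det := by rw [hPP, mul_one]
      rw [this]; exact hdetD
    have hdetM : (X * Y).det < 0 := by
      rw [det_mul]; exact mul_neg_of_pos_of_neg hdetX hdetY
    exact exists_neg_eig _ hdetM
  · -- uniqueness of the eigenspace
    rintro ⟨u, w, a, b, hli, ha, hb, hu, hw⟩
    have hu0 : u ≠ 0 := by have := hli.ne_zero 0; simpa using this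
    have hw0 : w ≠ 0 := by have := hli.ne_zero 1; simpa using this
    have hpair := LinearIndependent.pair_iff.1 hli
    have hXYu : X *ᵥ (Y *ᵥ u) = (-a) • u := by rw [mulVec_mulVec]; exact hu
    have hXYw : X *ᵥ (Y *ᵥ w) = (-b) • w := by rw [mulVec_mulVec]; exact hw
    set Buu := u ⬝ᵥ (Y *ᵥ u) with hBuu
    set Bww := w ⬝ᵥ (Y *ᵥ w) with hBww
    set Buw := u ⬝ᵥ (Y *ᵥ w) with hBuwdef
    set α := (Y *ᵥ u) ⬝ᵥ (X *ᵥ (Y *ᵥ u)) with hαdef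
    set β := (Y *ᵥ w) ⬝ᵥ (X *ᵥ (Y *ᵥ w)) with hβdef
    set δ := ((Y *ᵥ u) ⬝ᵥ (X *ᵥ (Y *ᵥ w))) + ((Y *ᵥ w) ⬝ᵥ (X *ᵥ (Y *ᵥ u))) with hδdef
    have hα : 0 < α := hpos u hu0
    have hβ : 0 < β := hpos w hw0
    have h1 : a * Buu = -α := by
      have e1 : α = -a * ((Y *ᵥ u) ⬝ᵥ u) := by
        rw [hαdef, hXYu, dotProduct_smul, smul_eq_mul]
      rw [dotProduct_comm, ← hBuu] at e1
      linarith [e1]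
    have h2 : b * Bww = -β := by
      have e1 : β = -b * ((Y *ᵥ w) ⬝ᵥ w) := by
        rw [hβdef, hXYw, dotProduct_smul, smul_eq_mul]
      rw [dotProduct_comm, ← hBww] at e1
      linarith [e1]
    have h3 : (a + b) * Buw = -δ := by
      have e1 : (Y *ᵥ u) ⬝ᵥ (X *ᵥ (Y *ᵥ w)) = -b * Buw := by
        rw [hXYw, dotProduct_smul, smul_eq_mul, dotProduct_comm, hBsymm w u, ← hBuwdef]
      have e2 : (Y *ᵥ w) ⬝ᵥ (X *ᵥ (Y *ᵥ u)) = -a * Buw := by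
        rw [hXYu, dotProduct_smul, smul_eq_mul, dotProduct_comm, ← hBuwdef]
      rw [hδdef, e1, e2]
      ring
    have hCS : ∀ r : ℝ, 0 ≤ β * (r * r) + δ * r + α := by
      intro r
      have hz : u + r • w ≠ 0 := by
        intro h0
        have := (hpair 1 r (by rw [one_smul]; exact h0)).1
        norm_num at this
      have h := (hpos (u + r • w) hz).le
      have hex : (Y *ᵥ (u + r • w)) ⬝ᵥ (X *ᵥ (Y *ᵥ (u + r • w)))
          = β * (r * r) + δ * r + α := by
        rw [hβdef, hδdef, hαdef]
        simp only [mulVec_add, mulVec_smul, dotProduct_add, add_dotProduct,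
          dotProduct_smul, smul_dotProduct, smul_eq_mul]
        ring
      rw [hex] at h
      exact h
    have hd := discrim_le_zero hCS
    rw [discrim] at hd
    have hdle : δ ^ 2 ≤ 4 * (β * α) := by nlinarith [hd]
    -- select a nonzero vector z in span {u, w} with (P z) i₀ = 0
    obtain ⟨s, t, hst, hzero⟩ :
        ∃ s t : ℝ, ¬(s = 0 ∧ t = 0) ∧ s * (P *ᵥ u) i₀ + t * (P *ᵥ w) i₀ = 0 := by
      by_cases hc : (P *ᵥ u) i₀ = 0 ∧ (P *ᵥ w) i₀ = 0
      · exact ⟨1, 0, by simp, by simp [hc.1, hc.2]⟩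
      · refine ⟨(P *ᵥ w) i₀, -(P *ᵥ u) i₀, ?_, by ring⟩
        rintro ⟨h1', h2'⟩
        exact hc ⟨by simpa using h2', h1'⟩
    set z := s • u + t • w with hzdef
    have hz0 : z ≠ 0 := fun h0 => hst (hpair s t (by rw [← hzdef]; exact h0))
    have hPz : (P *ᵥ z) i₀ = 0 := by
      rw [hzdef, mulVec_add, mulVec_smul, mulVec_smul]
      simpa [smul_eq_mul] using hzero
    -- positivity of z ⬝ᵥ Y z from the signature of Y
    have hpos2 : 0 < z ⬝ᵥ (Y *ᵥ z) := by
      have hyz : Y *ᵥ z = Pᵀ *ᵥ ((Matrix.diagonal μ) *ᵥ (P *ᵥ z)) := by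
        rw [hY, mulVec_mulVec, mulVec_mulVec]
      have hzd : z ⬝ᵥ (Y *ᵥ z) = (P *ᵥ z) ⬝ᵥ ((Matrix.diagonal μ) *ᵥ (P *ᵥ z)) := by
        rw [hyz, dotProduct_mulVec z Pᵀ _, vecMul_transpose]
      set y := P *ᵥ z with hydef
      have hyi₀ : y i₀ = 0 := hPz
      have hy0 : y ≠ 0 := by
        intro h0
        apply hz0
        have h4 : Pᵀ *ᵥ (P *ᵥ z) = (Pᵀ * P) *ᵥ z := mulVec_mulVec _ _ _
        rw [hP, one_mulVec, ← hydef, h0, mulVec_zero] at h4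
        exact h4.symm
      rw [hzd, dotProduct]
      obtain ⟨j, hj⟩ := Function.ne_iff.1 hy0
      have hji : j ≠ i₀ := by
        rintro rfl
        exact hj hyi₀
      apply Finset.sum_pos'
      · intro i _
        rw [mulVec_diagonal]
        rcases eq_or_ne i i₀ with rfl | hi
        · rw [hyi₀]; simp
        · nlinarith [(hμpos i hi).le, sq_nonneg (y i)]
      · refine ⟨j, Finset.mem_univ j, ?_⟩
        rw [mulVec_diagonal]
        have hsq : 0 < (y j) ^ 2 :=
          lt_of_le_of_ne (sq_nonneg _) (Ne.symm (pow_ne_zero 2 hj))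
        nlinarith [hμpos j hji, hsq]
    -- nonpositivity of z ⬝ᵥ Y z from the eigenvalue relations
    have hexp : z ⬝ᵥ (Y *ᵥ z) = s ^ 2 * Buu + 2 * (s * t) * Buw + t ^ 2 * Bww := by
      rw [hzdef]
      simp only [mulVec_add, mulVec_smul, dotProduct_add, add_dotProduct,
        dotProduct_smul, smul_dotProduct, smul_eq_mul]
      rw [hBsymm w u, ← hBuu, ← hBww, ← hBuwdef]
      ring
    have hnonpos := quad_nonpos a b α β δ Buu Bww Buw s t ha hb hα hβ h1 h2 h3 hdle
    rw [hexp] at hpos2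
    linarith
end

section
/- Let H be a real symmetric d×d matrix with exactly one negative eigenvalue and d−1 positive eigenvalues (counted with multiplicity); in particular H is invertible. Let α > 0 and let v ∈ ℝᵈ satisfy vᵀH⁻¹v = −1/α. Then: (i) the matrix H + α v vᵀ is positive semidefinite and det(H + α v vᵀ) = 0; (ii) the matrix H + 2α v vᵀ is positive definite and det(H + 2α v vᵀ) = −det H. -/
open Matrix

section Aux

/-- Restriction of a Lorentzian diagonal form to the orthogonal complement of a
timelike vector is nonnegative, and positive on nonzero vectors. -/
lemma rank_one_update_aux_perp {d : ℕ} (μ : Fin d → ℝ) (i₀ : Fin d) (hneg : μ i₀ < 0)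
    (hpos : ∀ i, i ≠ i₀ → 0 < μ i) (u z : Fin d → ℝ)
    (hu : ∑ i, μ i * u i ^ 2 < 0) (hperp : ∑ i, μ i * u i * z i = 0) :
    0 ≤ ∑ i, μ i * z i ^ 2 ∧ (z ≠ 0 → 0 < ∑ i, μ i * z i ^ 2) := by
  classical
  set s := Finset.univ.erase i₀ with hs
  have e1 : ∑ i, μ i * u i ^ 2 = μ i₀ * u i₀ ^ 2 + ∑ i ∈ s, μ i * u i ^ 2 :=
    (Finset.add_sum_erase _ _ (Finset.mem_univ i₀)).symm
  have e2 : ∑ i, μ i * u i * z i = μ i₀ * u i₀ * z i₀ + ∑ i ∈ s, μ i * u i * z i :=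
    (Finset.add_sum_erase _ _ (Finset.mem_univ i₀)).symm
  have e3 : ∑ i, μ i * z i ^ 2 = μ i₀ * z i₀ ^ 2 + ∑ i ∈ s, μ i * z i ^ 2 :=
    (Finset.add_sum_erase _ _ (Finset.mem_univ i₀)).symm
  have hposS : ∀ i ∈ s, 0 < μ i := fun i hi => hpos i (Finset.ne_of_mem_erase hi)
  have hSu : (0:ℝ) ≤ ∑ i ∈ s, μ i * u i ^ 2 :=
    Finset.sum_nonneg fun i hi => mul_nonneg (hposS i hi).le (sq_nonneg _)
  have hSz : (0:ℝ) ≤ ∑ i ∈ s, μ i * z i ^ 2 :=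
    Finset.sum_nonneg fun i hi => mul_nonneg (hposS i hi).le (sq_nonneg _)
  have hu' : μ i₀ * u i₀ ^ 2 + ∑ i ∈ s, μ i * u i ^ 2 < 0 := by rw [← e1]; exact hu
  have hperp' : μ i₀ * u i₀ * z i₀ + ∑ i ∈ s, μ i * u i * z i = 0 := by
    rw [← e2]; exact hperp
  have hCS : (∑ i ∈ s, μ i * u i * z i) ^ 2 ≤
      (∑ i ∈ s, μ i * u i ^ 2) * ∑ i ∈ s, μ i * z i ^ 2 := by
    have h := Finset.sum_mul_sq_le_sq_mul_sq s (fun i => Real.sqrt (μ i) * u i)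
      (fun i => Real.sqrt (μ i) * z i)
    have h1 : ∑ i ∈ s, (Real.sqrt (μ i) * u i) * (Real.sqrt (μ i) * z i)
        = ∑ i ∈ s, μ i * u i * z i := by
      refine Finset.sum_congr rfl fun i hi => ?_
      have hq : Real.sqrt (μ i) * Real.sqrt (μ i) = μ i :=
        Real.mul_self_sqrt (hposS i hi).le
      calc Real.sqrt (μ i) * u i * (Real.sqrt (μ i) * z i)
          = (Real.sqrt (μ i) * Real.sqrt (μ i)) * (u i * z i) := by ring
        _ = μ i * u i * z i := by rw [hq]; ring
    have h2 : ∑ i ∈ s, (Real.sqrt (μ i) * u i) ^ 2 = ∑ i ∈ s, μ i * u i ^ 2 := by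
      refine Finset.sum_congr rfl fun i hi => ?_
      rw [mul_pow, Real.sq_sqrt (hposS i hi).le]
    have h3 : ∑ i ∈ s, (Real.sqrt (μ i) * z i) ^ 2 = ∑ i ∈ s, μ i * z i ^ 2 := by
      refine Finset.sum_congr rfl fun i hi => ?_
      rw [mul_pow, Real.sq_sqrt (hposS i hi).le]
    rwa [h1, h2, h3] at h
  have hTeq : ∑ i ∈ s, μ i * u i * z i = -(μ i₀ * u i₀ * z i₀) := by linarith
  rw [hTeq, neg_sq] at hCS
  have h5 : μ i₀ * u i₀ ^ 2 < 0 := by linarith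
  have hnn : (0:ℝ) ≤ -(μ i₀ * u i₀ ^ 2) - ∑ i ∈ s, μ i * u i ^ 2 := by linarith
  constructor
  · rw [e3]
    nlinarith [hCS, h5, mul_nonneg hSz hnn]
  · intro hz
    rw [e3]
    rcases eq_or_lt_of_le hSz with hSz0 | hSz0
    · have hzall : ∀ i ∈ s, z i = 0 := by
        intro i hi
        have h0 := (Finset.sum_eq_zero_iff_of_nonneg
          (fun j hj => mul_nonneg (hposS j hj).le (sq_nonneg _))).mp hSz0.symm i hi
        rcases mul_eq_zero.mp h0 with h | h
        · exact absurd h (hposS i hi).ne'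
        · exact pow_eq_zero_iff two_ne_zero |>.mp h
      have hT : ∑ i ∈ s, μ i * u i * z i = 0 :=
        Finset.sum_eq_zero fun i hi => by rw [hzall i hi]; ring
      have hu0 : u i₀ ≠ 0 := by
        intro h0; rw [h0] at h5; simp at h5
      have hz0 : z i₀ ≠ 0 := by
        intro h0
        apply hz
        funext i
        by_cases hi : i = i₀
        · rw [hi]; exact h0
        · exact hzall i (Finset.mem_erase.mpr ⟨hi, Finset.mem_univ i⟩)
      have hzero : μ i₀ * u i₀ * z i₀ = 0 := by rw [hT] at hperp'; linarith
      exfalso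
      rcases mul_eq_zero.mp hzero with h | h
      · rcases mul_eq_zero.mp h with h | h
        · exact hneg.ne h
        · exact hu0 h
      · exact hz0 h
    · have hnn' : (0:ℝ) < (-(μ i₀ * u i₀ ^ 2) - ∑ i ∈ s, μ i * u i ^ 2) *
        (∑ i ∈ s, μ i * z i ^ 2) := mul_pos (by linarith) hSz0
      nlinarith [hCS, h5, hnn']

/-- The main quadratic inequality, in diagonal coordinates. -/
lemma rank_one_update_aux_main {d : ℕ} (μ : Fin d → ℝ) (i₀ : Fin d) (hneg : μ i₀ < 0)
    (hpos : ∀ i, i ≠ i₀ → 0 < μ i) (α : ℝ) (hα : 0 < α) (u : Fin d → ℝ)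
    (hu : ∑ i, μ i * u i ^ 2 = -(1/α)) (y : Fin d → ℝ) :
    0 ≤ ∑ i, μ i * y i ^ 2 + α * (∑ i, μ i * u i * y i) ^ 2 ∧
    (y ≠ 0 → 0 < ∑ i, μ i * y i ^ 2 + 2 * α * (∑ i, μ i * u i * y i) ^ 2) := by
  classical
  set B : ℝ := ∑ i, μ i * u i * y i with hB
  set z : Fin d → ℝ := fun i => y i + (α * B) * u i with hzdef
  have hulneg : ∑ i, μ i * u i ^ 2 < 0 := by
    rw [hu]
    have : (0:ℝ) < 1/α := by positivity
    linarith
  have hperp : ∑ i, μ i * u i * z i = 0 := by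
    have : ∀ i, μ i * u i * z i = μ i * u i * y i + (α * B) * (μ i * u i ^ 2) := by
      intro i; simp only [hzdef]; ring
    rw [Finset.sum_congr rfl fun i _ => this i, Finset.sum_add_distrib,
      ← Finset.mul_sum, hu, ← hB]
    field_simp
    ring
  have hzq : ∑ i, μ i * z i ^ 2 = ∑ i, μ i * y i ^ 2 + α * B ^ 2 := by
    have : ∀ i, μ i * z i ^ 2 = μ i * y i ^ 2 + (2 * (α * B)) * (μ i * u i * y i)
        + (α * B) ^ 2 * (μ i * u i ^ 2) := by
      intro i; simp only [hzdef]; ring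
    rw [Finset.sum_congr rfl fun i _ => this i, Finset.sum_add_distrib,
      Finset.sum_add_distrib, ← Finset.mul_sum, ← Finset.mul_sum, hu, ← hB]
    field_simp
    ring
  obtain ⟨hz1, hz2⟩ := rank_one_update_aux_perp μ i₀ hneg hpos u z hulneg hperp
  constructor
  · rw [hzq] at hz1; linarith
  · intro hy
    by_cases hB0 : B = 0
    · have hzy : z = y := by funext i; simp [hzdef, hB0]
      have hz' := hz2 (by rw [hzy]; exact hy)
      rw [hzq] at hz'
      rw [hB0] at hz' ⊢
      nlinarith [hz']
    · have h1 : 0 < α * B ^ 2 := by positivity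
      rw [hzq] at hz1
      nlinarith
  
end Aux

/-- Paper's Lemma 3.1: for a symmetric matrix `H` with exactly one negative
eigenvalue and `d-1` positive eigenvalues, `α > 0` and `v` with `vᵀH⁻¹v = -1/α`,
the matrix `H + α v vᵀ` is positive semidefinite with vanishing determinant, and
`H + 2α v vᵀ` is positive definite with determinant `-det H`. -/
theorem rank_one_update_of_saddle_hessian {d : ℕ} (H : Matrix (Fin d) (Fin d) ℝ)
    (hHsymm : H.IsSymm)
    (hspec : ∃ (P : Matrix (Fin d) (Fin d) ℝ) (μ : Fin d → ℝ) (i₀ : Fin d),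
      Pᵀ * P = 1 ∧ H = Pᵀ * Matrix.diagonal μ * P ∧ μ i₀ < 0 ∧ ∀ i, i ≠ i₀ → 0 < μ i)
    (α : ℝ) (hα : 0 < α) (v : Fin d → ℝ)
    (hv : v ⬝ᵥ (H⁻¹ *ᵥ v) = -1/α) :
    (H + α • vecMulVec v v).PosSemidef ∧ (H + α • vecMulVec v v).det = 0 ∧
    (H + (2*α) • vecMulVec v v).PosDef ∧ (H + (2*α) • vecMulVec v v).det = - H.det := by
  classical
  obtain ⟨P, μ, i₀, hP, hH, hneg, hpos⟩ := hspec
  have hP' : P * Pᵀ = 1 := mul_eq_one_comm.mp hP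
  have hμ0 : ∀ i, μ i ≠ 0 := by
    intro i
    by_cases h : i = i₀
    · rw [h]; exact hneg.ne
    · exact (hpos i h).ne'
  -- inverse of H
  have hHinv : H⁻¹ = Pᵀ * Matrix.diagonal (fun i => (μ i)⁻¹) * P := by
    apply Matrix.inv_eq_right_inv
    rw [hH]
    have : Pᵀ * Matrix.diagonal μ * P * (Pᵀ * Matrix.diagonal (fun i => (μ i)⁻¹) * P)
        = Pᵀ * (Matrix.diagonal μ * ((P * Pᵀ) * (Matrix.diagonal (fun i => (μ i)⁻¹) * P))) := by
      simp only [Matrix.mul_assoc]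
    rw [this, hP', Matrix.one_mul, ← Matrix.mul_assoc (Matrix.diagonal μ),
      Matrix.diagonal_mul_diagonal]
    have hdd : Matrix.diagonal (fun i => μ i * (μ i)⁻¹) = (1 : Matrix (Fin d) (Fin d) ℝ) := by
      rw [show (fun i => μ i * (μ i)⁻¹) = fun _ => (1:ℝ) from
        funext fun i => mul_inv_cancel₀ (hμ0 i), Matrix.diagonal_one]
    rw [hdd, Matrix.one_mul, hP]
  -- determinant of H
  have hdP : P.det * P.det = 1 := by
    have := congrArg Matrix.det hP
    rwa [Matrix.det_mul, Matrix.det_transpose, Matrix.det_one] at this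
  have hdetH : H.det = ∏ i, μ i := by
    rw [hH, Matrix.det_mul, Matrix.det_mul, Matrix.det_transpose, Matrix.det_diagonal]
    linear_combination (∏ i, μ i) * hdP
  have hdetHneg : H.det < 0 := by
    rw [hdetH, ← Finset.mul_prod_erase Finset.univ μ (Finset.mem_univ i₀)]
    exact mul_neg_of_neg_of_pos hneg
      (Finset.prod_pos fun i hi => hpos i (Finset.ne_of_mem_erase hi))
  have hdetU : IsUnit H.det := isUnit_iff_ne_zero.mpr hdetHneg.ne
  -- quadratic form transfer
  have hquad : ∀ x : Fin d → ℝ, x ⬝ᵥ (H *ᵥ x) = ∑ i, μ i * (P *ᵥ x) i ^ 2 := by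
    intro x
    rw [hH, Matrix.mul_assoc, ← Matrix.mulVec_mulVec, Matrix.dotProduct_mulVec,
      Matrix.vecMul_transpose, ← Matrix.mulVec_mulVec]
    simp only [dotProduct, Matrix.mulVec_diagonal]
    exact Finset.sum_congr rfl fun i _ => by ring
  -- dot products transfer
  have hdot : ∀ x : Fin d → ℝ, v ⬝ᵥ x = (P *ᵥ v) ⬝ᵥ (P *ᵥ x) := by
    intro x
    conv_lhs => rw [show x = (1 : Matrix (Fin d) (Fin d) ℝ) *ᵥ x by simp, ← hP,
      ← Matrix.mulVec_mulVec, Matrix.dotProduct_mulVec, Matrix.vecMul_transpose]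
  -- the vector u in diagonal coordinates
  set b : Fin d → ℝ := P *ᵥ v with hb
  set u : Fin d → ℝ := fun i => b i / μ i with hudef
  have hbu : ∀ i, μ i * u i = b i := by
    intro i; rw [hudef, mul_comm, div_mul_cancel₀ _ (hμ0 i)]
  have huu : ∑ i, μ i * u i ^ 2 = -(1/α) := by
    have hv' : v ⬝ᵥ (H⁻¹ *ᵥ v) = ∑ i, (μ i)⁻¹ * b i ^ 2 := by
      rw [hHinv, Matrix.mul_assoc, ← Matrix.mulVec_mulVec, Matrix.dotProduct_mulVec,
        Matrix.vecMul_transpose, ← Matrix.mulVec_mulVec]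
      simp only [dotProduct, Matrix.mulVec_diagonal, ← hb]
      exact Finset.sum_congr rfl fun i _ => by ring
    have : ∑ i, μ i * u i ^ 2 = ∑ i, (μ i)⁻¹ * b i ^ 2 := by
      refine Finset.sum_congr rfl fun i _ => ?_
      rw [hudef]
      field_simp [hμ0 i]
    rw [this, ← hv', hv]
    ring
  have hBdot : ∀ x : Fin d → ℝ, ∑ i, μ i * u i * (P *ᵥ x) i = v ⬝ᵥ x := by
    intro x
    rw [hdot x]
    simp only [dotProduct, ← hb]
    exact Finset.sum_congr rfl fun i _ => by rw [hbu i]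
  -- quadratic form of rank-one update
  have hrk1 : ∀ (c : ℝ) (x : Fin d → ℝ),
      x ⬝ᵥ ((c • vecMulVec v v) *ᵥ x) = c * (v ⬝ᵥ x) ^ 2 := by
    intro c x
    simp only [Matrix.smul_mulVec, dotProduct_smul, smul_eq_mul]
    congr 1
    simp only [dotProduct, Matrix.mulVec, Matrix.vecMulVec_apply]
    calc ∑ i, x i * ∑ j, v i * v j * x j
        = ∑ i, (v i * x i) * ∑ j, v j * x j := by
          refine Finset.sum_congr rfl fun i _ => ?_
          rw [Finset.mul_sum, Finset.mul_sum]
          exact Finset.sum_congr rfl fun j _ => by ring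
      _ = (∑ i, v i * x i) * ∑ j, v j * x j := by rw [← Finset.sum_mul]
      _ = (∑ i, v i * x i) ^ 2 := (sq _).symm
  -- the combined quadratic form
  have hcomb : ∀ (c : ℝ) (x : Fin d → ℝ),
      x ⬝ᵥ ((H + c • vecMulVec v v) *ᵥ x)
        = ∑ i, μ i * (P *ᵥ x) i ^ 2 + c * (∑ i, μ i * u i * (P *ᵥ x) i) ^ 2 := by
    intro c x
    rw [Matrix.add_mulVec, dotProduct_add, hquad, hrk1, hBdot]
  -- Px = 0 → x = 0
  have hPinj : ∀ x : Fin d → ℝ, P *ᵥ x = 0 → x = 0 := by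
    intro x hx
    have : Pᵀ *ᵥ (P *ᵥ x) = x := by
      rw [Matrix.mulVec_mulVec, hP, Matrix.one_mulVec]
    rw [hx, Matrix.mulVec_zero] at this
    exact this.symm
  -- Hermitian-ness
  have hsymmE : ∀ i j, H j i = H i j := by
    intro i j
    conv_rhs => rw [← hHsymm]
    rfl
  have hherm : ∀ c : ℝ, (H + c • vecMulVec v v).IsHermitian := by
    intro c
    show (H + c • vecMulVec v v)ᴴ = _
    ext i j
    simp only [Matrix.conjTranspose_apply, Matrix.add_apply, Matrix.smul_apply,
      Matrix.vecMulVec_apply, star_trivial, smul_eq_mul]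
    rw [hsymmE i j]
    ring
  -- determinant identity
  have hdetc : ∀ c : ℝ, (H + c • vecMulVec v v).det = H.det * (1 + c * (-1/α)) := by
    intro c
    have hvv : c • vecMulVec v v = Matrix.replicateCol Unit (c • v) * Matrix.replicateRow Unit v := by
      rw [← Matrix.vecMulVec_eq]
      ext i j
      simp [Matrix.vecMulVec_apply, mul_assoc]
    rw [hvv, Matrix.det_add_replicateCol_mul_replicateRow hdetU]
    congr 1
    rw [← Matrix.replicateRow_vecMul, Matrix.det_unique, Matrix.add_apply, Matrix.one_apply_eq,
      Matrix.replicateRow_mul_replicateCol_apply, dotProduct_smul, ← Matrix.dotProduct_mulVec, hv]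
    simp [smul_eq_mul]
  -- now assemble
  refine ⟨Matrix.PosSemidef.of_dotProduct_mulVec_nonneg (hherm α) ?_, ?_, Matrix.PosDef.of_dotProduct_mulVec_pos (hherm (2*α)) ?_, ?_⟩
  · intro x
    rw [star_trivial, hcomb]
    exact (rank_one_update_aux_main μ i₀ hneg hpos α hα u huu (P *ᵥ x)).1
  · have h0 : (1:ℝ) + α * (-1/α) = 0 := by field_simp; norm_num
    rw [hdetc, h0, mul_zero]
  · intro x hx
    rw [star_trivial, hcomb]
    have hy : P *ᵥ x ≠ 0 := fun h => hx (hPinj x h)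
    have := (rank_one_update_aux_main μ i₀ hneg hpos α hα u huu (P *ᵥ x)).2 hy
    linarith [this]
  · have h0 : (1:ℝ) + 2*α * (-1/α) = -1 := by field_simp; ring
    rw [hdetc, h0]
    ring
end

section
/- Let H be a real symmetric d×d matrix with exactly one negative eigenvalue −λ₁ (the remaining d−1 eigenvalues being positive), and let u₁ be an eigenvector of H for −λ₁. If v ∈ ℝᵈ satisfies vᵀH⁻¹v < 0, then v·u₁ ≠ 0. In particular, if A is a real d×d matrix whose symmetric part (A + Aᵀ)/2 is positive definite, and v ≠ 0 satisfies H Aᵀ v = −μ v for some μ > 0, then v is not orthogonal to u₁. -/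
open Matrix

/-- Section 3.1 of the paper: if `H` is symmetric with unique negative eigenvalue
`-λ₁` (eigenvector `u₁`, other eigenvalues positive) and `vᵀH⁻¹v < 0`, then
`v · u₁ ≠ 0`.  In particular the eigenvector `v` of `H Aᵀ` for a negative
eigenvalue `-μ` is not orthogonal to `u₁`, when the symmetric part of `A` is
positive definite. -/
theorem eigenvector_not_orthogonal_to_unstable_direction {d : ℕ}
    (H : Matrix (Fin d) (Fin d) ℝ) (hHsymm : H.IsSymm)
    (lam1 : ℝ) (hlam1 : 0 < lam1) (u1 : Fin d → ℝ) (hu1 : u1 ≠ 0)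
    (heig1 : H *ᵥ u1 = (-lam1) • u1)
    (hspec : ∃ (P : Matrix (Fin d) (Fin d) ℝ) (μ : Fin d → ℝ) (i₀ : Fin d),
      Pᵀ * P = 1 ∧ H = Pᵀ * Matrix.diagonal μ * P ∧ μ i₀ = -lam1 ∧ ∀ i, i ≠ i₀ → 0 < μ i) :
    (∀ v : Fin d → ℝ, v ⬝ᵥ (H⁻¹ *ᵥ v) < 0 → v ⬝ᵥ u1 ≠ 0) ∧
    (∀ (A : Matrix (Fin d) (Fin d) ℝ) (μ : ℝ) (v : Fin d → ℝ),
      ((1/2 : ℝ) • (A + Aᵀ)).PosDef → 0 < μ → v ≠ 0 →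
      (H * Aᵀ) *ᵥ v = (-μ) • v → v ⬝ᵥ u1 ≠ 0) := by
  obtain ⟨P, μ, i₀, hP, hH, hμ0, hμpos⟩ := hspec
  have hPP : P * Pᵀ = 1 := mul_eq_one_comm.mp hP
  have hμne : ∀ i, μ i ≠ 0 := by
    intro i
    by_cases h : i = i₀
    · subst h; rw [hμ0]; exact (neg_lt_zero.mpr hlam1).ne
    · exact (hμpos i h).ne'
  set D' : Matrix (Fin d) (Fin d) ℝ := Matrix.diagonal (fun i => (μ i)⁻¹) with hD'
  have hDinv : Matrix.diagonal μ * D' = 1 := by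
    rw [hD', Matrix.diagonal_mul_diagonal]
    have : (fun i => μ i * (μ i)⁻¹) = fun _ => (1:ℝ) := by
      funext i; exact mul_inv_cancel₀ (hμne i)
    rw [this]; exact Matrix.diagonal_one
  have hright : H * (Pᵀ * D' * P) = 1 := by
    rw [hH]
    have e1 : Pᵀ * Matrix.diagonal μ * P * (Pᵀ * D' * P)
        = Pᵀ * (Matrix.diagonal μ * ((P * Pᵀ) * (D' * P))) := by
      simp only [Matrix.mul_assoc]
    rw [e1, hPP, one_mul, ← Matrix.mul_assoc (Matrix.diagonal μ) D' P, hDinv, one_mul, hP]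
  have hHinv : H⁻¹ = Pᵀ * D' * P := Matrix.inv_eq_right_inv hright
  have hleft : (Pᵀ * D' * P) * H = 1 := mul_eq_one_comm.mp hright
  -- eigenvector structure
  set w1 : Fin d → ℝ := P *ᵥ u1 with hw1
  have hu1rec : Pᵀ *ᵥ w1 = u1 := by
    rw [hw1, Matrix.mulVec_mulVec, hP, Matrix.one_mulVec]
  have hDw1 : Matrix.diagonal μ *ᵥ w1 = (-lam1) • w1 := by
    have : P *ᵥ (H *ᵥ u1) = P *ᵥ ((-lam1) • u1) := by rw [heig1]
    rw [hH] at this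
    simp only [Matrix.mulVec_mulVec, Matrix.mulVec_smul] at this
    calc Matrix.diagonal μ *ᵥ w1 = (Matrix.diagonal μ * P) *ᵥ u1 := by
          rw [hw1, Matrix.mulVec_mulVec]
      _ = (P * (Pᵀ * Matrix.diagonal μ * P)) *ᵥ u1 := by
          rw [show P * (Pᵀ * Matrix.diagonal μ * P) = (P * Pᵀ) * (Matrix.diagonal μ * P) by
            simp only [Matrix.mul_assoc], hPP, one_mul]
      _ = (-lam1) • w1 := this
  have hw1zero : ∀ i, i ≠ i₀ → w1 i = 0 := by
    intro i hi
    have h1 : μ i * w1 i = -(lam1 * w1 i) := by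
      have := congrFun hDw1 i
      simpa [Matrix.mulVec_diagonal] using this
    have h2 : (μ i + lam1) * w1 i = 0 := by linear_combination h1
    rcases mul_eq_zero.mp h2 with h3 | h3
    · exfalso; have := hμpos i hi; linarith
    · exact h3
  have hw1ne : w1 i₀ ≠ 0 := by
    intro h
    apply hu1
    rw [← hu1rec]
    have : w1 = 0 := by
      funext i
      by_cases hi : i = i₀
      · rw [hi]; exact h
      · exact hw1zero i hi
    rw [this, Matrix.mulVec_zero]
  -- Part 1
  have part1 : ∀ v : Fin d → ℝ, v ⬝ᵥ (H⁻¹ *ᵥ v) < 0 → v ⬝ᵥ u1 ≠ 0 := by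
    intro v hneg hortho
    set w : Fin d → ℝ := P *ᵥ v with hw
    have hdot : v ⬝ᵥ u1 = w ⬝ᵥ w1 := by
      rw [← hu1rec, Matrix.dotProduct_mulVec, Matrix.vecMul_transpose]
    have hwi0 : w i₀ = 0 := by
      have hsum : w ⬝ᵥ w1 = 0 := by rw [← hdot]; exact hortho
      have : w ⬝ᵥ w1 = w i₀ * w1 i₀ := by
        rw [dotProduct]
        apply Finset.sum_eq_single
        · intro i _ hi; rw [hw1zero i hi, mul_zero]
        · intro h; exact absurd (Finset.mem_univ i₀) h
      rw [this] at hsum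
      exact (mul_eq_zero.mp hsum).resolve_right hw1ne
    have hval : v ⬝ᵥ (H⁻¹ *ᵥ v) = ∑ i, w i * ((μ i)⁻¹ * w i) := by
      rw [hHinv]
      have : (Pᵀ * D' * P) *ᵥ v = Pᵀ *ᵥ (D' *ᵥ w) := by
        simp only [hw, Matrix.mulVec_mulVec, Matrix.mul_assoc]
      rw [this, Matrix.dotProduct_mulVec, Matrix.vecMul_transpose, ← hw, dotProduct]
      congr 1
      funext i
      rw [hD', Matrix.mulVec_diagonal]
    have : 0 ≤ v ⬝ᵥ (H⁻¹ *ᵥ v) := by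
      rw [hval]
      apply Finset.sum_nonneg
      intro i _
      by_cases hi : i = i₀
      · rw [hi, hwi0]; simp
      · have : 0 < (μ i)⁻¹ := inv_pos.mpr (hμpos i hi)
        have h2 : w i * ((μ i)⁻¹ * w i) = (μ i)⁻¹ * (w i)^2 := by ring
        rw [h2]
        positivity
    linarith
  refine ⟨part1, ?_⟩
  intro A μ' v hpos hμ' hv heigv
  have hAv : Aᵀ *ᵥ v = (-μ') • (H⁻¹ *ᵥ v) := by
    have h1 : H *ᵥ (Aᵀ *ᵥ v) = (-μ') • v := by
      rw [Matrix.mulVec_mulVec]; exact heigv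
    have h2 : H⁻¹ *ᵥ (H *ᵥ (Aᵀ *ᵥ v)) = Aᵀ *ᵥ v := by
      rw [Matrix.mulVec_mulVec, hHinv, hleft, Matrix.one_mulVec]
    rw [h1, Matrix.mulVec_smul] at h2
    rw [← h2]
  have hApos : 0 < v ⬝ᵥ (Aᵀ *ᵥ v) := by
    have := hpos.dotProduct_mulVec_pos (x := v) (by simpa using hv)
    have hstar : star v = v := rfl
    rw [hstar] at this
    have hexp : v ⬝ᵥ (((1/2 : ℝ) • (A + Aᵀ)) *ᵥ v) = v ⬝ᵥ (Aᵀ *ᵥ v) := by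
      have hsymm : v ⬝ᵥ (Aᵀ *ᵥ v) = v ⬝ᵥ (A *ᵥ v) := by
        rw [Matrix.dotProduct_mulVec, Matrix.vecMul_transpose, dotProduct_comm]
      rw [Matrix.smul_mulVec, dotProduct_smul, Matrix.add_mulVec,
        dotProduct_add, hsymm, smul_eq_mul]
      try ring
    rw [← hexp]
    exact_mod_cast this
  have hneg : v ⬝ᵥ (H⁻¹ *ᵥ v) < 0 := by
    have : v ⬝ᵥ (Aᵀ *ᵥ v) = -μ' * (v ⬝ᵥ (H⁻¹ *ᵥ v)) := by
      rw [hAv, dotProduct_smul, smul_eq_mul]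
    nlinarith
  exact part1 v hneg
end

section
/- Let L ≥ 2 and let z₀, z₁, …, z_L be vectors in ℝᵈ with z_L = z₀ (a closed cycle). Set A = ∑_{i=0}^{L−1} (zᵢ − zᵢ₊₁) zᵢᵀ. Then A + Aᵀ = ∑_{i=0}^{L−1} (zᵢ − zᵢ₊₁)(zᵢ − zᵢ₊₁)ᵀ. Consequently, if the increments {zᵢ₊₁ − zᵢ : 0 ≤ i < L} span ℝᵈ, then A + Aᵀ is positive definite (equivalently, the symmetric part of A is positive definite). -/
open Matrix

lemma sum_mulVec' {d : ℕ} (s : Finset ℕ) (f : ℕ → Matrix (Fin d) (Fin d) ℝ)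
    (y : Fin d → ℝ) : (∑ i ∈ s, f i) *ᵥ y = ∑ i ∈ s, f i *ᵥ y := by
  ext j
  simp only [mulVec, dotProduct, Matrix.sum_apply, Finset.sum_apply, Finset.sum_mul]
  rw [Finset.sum_comm]

lemma dot_sum' {d : ℕ} (s : Finset ℕ) (f : ℕ → Fin d → ℝ) (y : Fin d → ℝ) :
    y ⬝ᵥ (∑ i ∈ s, f i) = ∑ i ∈ s, y ⬝ᵥ f i := by
  simp only [dotProduct, Finset.sum_apply, Finset.mul_sum]
  rw [Finset.sum_comm]

lemma dot_vecMulVec_mulVec {d : ℕ} (w x : Fin d → ℝ) :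
    x ⬝ᵥ (vecMulVec w w *ᵥ x) = (w ⬝ᵥ x) ^ 2 := by
  simp [dotProduct, vecMulVec, mulVec, Finset.mul_sum, Finset.sum_mul, sq]
  rw [Finset.sum_comm]
  apply Finset.sum_congr rfl; intro i _
  apply Finset.sum_congr rfl; intro j _
  ring

/-- Section 3.1 of the paper: for a closed cycle `z₀, …, z_L = z₀` in `ℝᵈ` and
`A = ∑ (zᵢ - zᵢ₊₁) zᵢᵀ`, one has `A + Aᵀ = ∑ (zᵢ - zᵢ₊₁)(zᵢ - zᵢ₊₁)ᵀ`; hence if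
the increments span `ℝᵈ`, the symmetric part of `A` is positive definite. -/
theorem cycle_matrix_symmetric_part {d : ℕ} (L : ℕ) (hL : 2 ≤ L)
    (z : ℕ → Fin d → ℝ) (hz : z L = z 0)
    (A : Matrix (Fin d) (Fin d) ℝ)
    (hA : A = ∑ i ∈ Finset.range L, vecMulVec (z i - z (i+1)) (z i)) :
    A + Aᵀ = ∑ i ∈ Finset.range L, vecMulVec (z i - z (i+1)) (z i - z (i+1)) ∧
    (Submodule.span ℝ {w : Fin d → ℝ | ∃ i, i < L ∧ w = z (i+1) - z i} = ⊤ →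
      (A + Aᵀ).PosDef) := by
  have key : A + Aᵀ = ∑ i ∈ Finset.range L,
      vecMulVec (z i - z (i+1)) (z i - z (i+1)) := by
    subst hA
    ext j k
    simp only [Matrix.add_apply, transpose_apply, Matrix.sum_apply, vecMulVec_apply,
      Pi.sub_apply]
    rw [← sub_eq_zero, ← Finset.sum_add_distrib, ← Finset.sum_sub_distrib]
    have : ∀ i, (z i j - z (i+1) j) * z i k + (z i k - z (i+1) k) * z i j -
        (z i j - z (i+1) j) * (z i k - z (i+1) k) =
        z i j * z i k - z (i+1) j * z (i+1) k := by intro i; ring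
    rw [Finset.sum_congr rfl fun i _ => this i,
      Finset.sum_range_sub' (fun i => z i j * z i k) L, hz, sub_self]
  refine ⟨key, fun hspan => ?_⟩
  rw [key]
  refine Matrix.posDef_iff_dotProduct_mulVec.mpr ⟨?_, ?_⟩
  · -- Hermitian
    unfold Matrix.IsHermitian
    rw [conjTranspose_sum]
    apply Finset.sum_congr rfl
    intro i _
    ext j k
    simp [vecMulVec_apply, mul_comm]
  · intro x hx
    have hform : ∀ y : Fin d → ℝ,
        star y ⬝ᵥ ((∑ i ∈ Finset.range L,
          vecMulVec (z i - z (i+1)) (z i - z (i+1))) *ᵥ y) =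
        ∑ i ∈ Finset.range L, ((z i - z (i+1)) ⬝ᵥ y) ^ 2 := by
      intro y
      rw [sum_mulVec', dot_sum']
      simp only [star_trivial]
      exact Finset.sum_congr rfl fun i _ => dot_vecMulVec_mulVec _ _
    rw [hform x]
    refine Finset.sum_pos' (fun i _ => sq_nonneg ((z i - z (i+1)) ⬝ᵥ x)) ?_
    · -- existence of a positive term
      by_contra hcon
      push_neg at hcon
      have hall : ∀ i < L, (z i - z (i+1)) ⬝ᵥ x = 0 := by
        intro i hi
        have := hcon i (Finset.mem_range.mpr hi)
        have := sq_nonneg ((z i - z (i+1)) ⬝ᵥ x)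
        nlinarith [hcon i (Finset.mem_range.mpr hi), sq_nonneg ((z i - z (i+1)) ⬝ᵥ x)]
      -- x is orthogonal to all generators, hence to ⊤
      have hx0 : x = 0 := by
        have hmem : x ∈ Submodule.span ℝ
            {w : Fin d → ℝ | ∃ i, i < L ∧ w = z (i+1) - z i} := by
          rw [hspan]; trivial
        have : x ⬝ᵥ x = 0 := by
          have : ∀ w ∈ Submodule.span ℝ
              {w : Fin d → ℝ | ∃ i, i < L ∧ w = z (i+1) - z i},
              w ⬝ᵥ x = 0 := by
            intro w hw
            induction hw using Submodule.span_induction with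
            | mem w hwm =>
              obtain ⟨i, hi, rfl⟩ := hwm
              have := hall i hi
              rw [sub_dotProduct] at this ⊢
              linarith
            | zero => simp
            | add a b _ _ ha hb => rw [add_dotProduct, ha, hb, add_zero]
            | smul c a _ ha => rw [smul_dotProduct, ha, smul_zero]
          exact this x hmem
        ext j
        have hnn : ∀ j, 0 ≤ x j * x j := fun j => mul_self_nonneg _
        have := (Finset.sum_eq_zero_iff_of_nonneg (fun j _ => hnn j)).mp this
        have h0 := mul_self_eq_zero.mp (this j (Finset.mem_univ j))
        simpa using h0
      exact hx hx0
end

section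
/- Fix an integer L ≥ 1 and functions f, g : ℤ/Lℤ → ℝ. Then (∑_{i ∈ ℤ/Lℤ} f(i)(g(i+1) − g(i)))² ≤ L² (∑_{i ∈ ℤ/Lℤ} (f(i+1) − f(i))²)(∑_{i ∈ ℤ/Lℤ} (g(i+1) − g(i))²). -/
open Finset

private lemma telescope {L : ℕ} [NeZero L] (g : ZMod L → ℝ) (n : ℕ) :
    g (n : ZMod L) - g 0 = ∑ k ∈ Finset.range n, (g ((k : ZMod L) + 1) - g (k : ZMod L)) := by
  induction n with
  | zero => simp
  | succ n ih =>
      rw [Finset.sum_range_succ, ← ih]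
      push_cast
      ring

private lemma point_bound {L : ℕ} [NeZero L] (g : ZMod L → ℝ) (i : ZMod L) :
    (g i - g 0) ^ 2 ≤ (L : ℝ) * ∑ j : ZMod L, (g (j + 1) - g j) ^ 2 := by
  have hi : ((i.val : ZMod L)) = i := ZMod.natCast_val i |>.trans (ZMod.cast_id _ _)
  have hlt : i.val < L := ZMod.val_lt i
  have h1 : g i - g 0 = ∑ k ∈ Finset.range i.val, (g ((k : ZMod L) + 1) - g (k : ZMod L)) := by
    have := telescope g i.val; rwa [hi] at this
  have h2 : (g i - g 0) ^ 2 ≤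
      (Finset.range i.val).card * ∑ k ∈ Finset.range i.val,
        (g ((k : ZMod L) + 1) - g (k : ZMod L)) ^ 2 := by
    rw [h1]
    have := sq_sum_le_card_mul_sum_sq (s := Finset.range i.val)
      (f := fun k : ℕ => g ((k : ZMod L) + 1) - g (k : ZMod L))
    exact_mod_cast this
  have h3 : ∑ k ∈ Finset.range i.val, (g ((k : ZMod L) + 1) - g (k : ZMod L)) ^ 2 ≤
      ∑ j : ZMod L, (g (j + 1) - g j) ^ 2 := by
    have hinj : Set.InjOn (fun k : ℕ => (k : ZMod L)) (Finset.range i.val) := by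
      intro a ha b hb hab
      simp only [Finset.coe_range, Set.mem_Iio] at ha hb
      have := congrArg ZMod.val hab
      rwa [ZMod.val_cast_of_lt (ha.trans hlt), ZMod.val_cast_of_lt (hb.trans hlt)] at this
    calc ∑ k ∈ Finset.range i.val, (g ((k : ZMod L) + 1) - g (k : ZMod L)) ^ 2
        = ∑ j ∈ (Finset.range i.val).image (fun k : ℕ => (k : ZMod L)),
            (g (j + 1) - g j) ^ 2 := (Finset.sum_image (f := fun j : ZMod L => (g (j + 1) - g j) ^ 2)
            (fun a ha b hb => hinj ha hb)).symm
      _ ≤ ∑ j : ZMod L, (g (j + 1) - g j) ^ 2 :=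
          Finset.sum_le_sum_of_subset_of_nonneg (Finset.subset_univ _)
            (fun _ _ _ => sq_nonneg _)
  calc (g i - g 0) ^ 2 ≤ (Finset.range i.val).card * ∑ k ∈ Finset.range i.val,
        (g ((k : ZMod L) + 1) - g (k : ZMod L)) ^ 2 := h2
    _ ≤ (L : ℝ) * ∑ j : ZMod L, (g (j + 1) - g j) ^ 2 := by
        apply mul_le_mul (by rw [Finset.card_range]; exact_mod_cast hlt.le) h3
          (Finset.sum_nonneg fun _ _ => sq_nonneg _) (Nat.cast_nonneg _)

/-- Sector condition on a cycle (paper's Lemma 2.1, per-cycle form):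
`(∑ f(i)(g(i+1) - g(i)))² ≤ L² (∑ (f(i+1)-f(i))²)(∑ (g(i+1)-g(i))²)`
over the cyclic group `ℤ/Lℤ`. -/
theorem cyclic_sector_condition (L : ℕ) [NeZero L] (hL : 1 ≤ L) (f g : ZMod L → ℝ) :
    (∑ i : ZMod L, f i * (g (i+1) - g i)) ^ 2 ≤
      (L : ℝ) ^ 2 * (∑ i : ZMod L, (f (i+1) - f i) ^ 2) *
        (∑ i : ZMod L, (g (i+1) - g i) ^ 2) := by
  -- Abel summation: reindex i ↦ i+1
  have hshift : ∀ (F : ZMod L → ℝ), ∑ i : ZMod L, F (i + 1) = ∑ i : ZMod L, F i :=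
    fun F => Fintype.sum_equiv (Equiv.addRight 1) _ _ (fun i => rfl)
  have habel : ∑ i : ZMod L, f i * (g (i+1) - g i)
      = ∑ i : ZMod L, (f i - f (i + 1)) * (g (i + 1) - g 0) := by
    have h1 : ∑ i : ZMod L, f (i + 1) * g (i + 1) = ∑ i : ZMod L, f i * g i :=
      hshift (fun i => f i * g i)
    have h2 : ∑ i : ZMod L, (f i - f (i + 1)) = 0 := by
      rw [Finset.sum_sub_distrib, hshift f, sub_self]
    have h3 : ∑ i : ZMod L, (f i - f (i + 1)) * g 0 = 0 := by
      rw [← Finset.sum_mul, h2, zero_mul]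
    calc ∑ i : ZMod L, f i * (g (i+1) - g i)
        = (∑ i : ZMod L, f i * g (i + 1)) - ∑ i : ZMod L, f (i + 1) * g (i + 1) := by
          rw [h1]; rw [← Finset.sum_sub_distrib]; exact Finset.sum_congr rfl fun i _ => by ring
      _ = ∑ i : ZMod L, (f i - f (i + 1)) * g (i + 1) := by
          rw [← Finset.sum_sub_distrib]; exact Finset.sum_congr rfl fun i _ => by ring
      _ = ∑ i : ZMod L, (f i - f (i + 1)) * (g (i + 1) - g 0) := by
          rw [Finset.sum_congr rfl fun i _ => (mul_sub _ _ _), Finset.sum_sub_distrib, h3,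
            sub_zero]
  rw [habel]
  have hCS := Finset.sum_mul_sq_le_sq_mul_sq Finset.univ
    (fun i : ZMod L => f i - f (i + 1)) (fun i : ZMod L => g (i + 1) - g 0)
  have hf : ∑ i : ZMod L, (f i - f (i + 1)) ^ 2 = ∑ i : ZMod L, (f (i + 1) - f i) ^ 2 :=
    Finset.sum_congr rfl fun i _ => by ring
  have hg : ∑ i : ZMod L, (g (i + 1) - g 0) ^ 2
      ≤ (L : ℝ) * ((L : ℝ) * ∑ j : ZMod L, (g (j + 1) - g j) ^ 2) := by
    calc ∑ i : ZMod L, (g (i + 1) - g 0) ^ 2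
        ≤ ∑ _i : ZMod L, (L : ℝ) * ∑ j : ZMod L, (g (j + 1) - g j) ^ 2 :=
          Finset.sum_le_sum fun i _ => point_bound g (i + 1)
      _ = (L : ℝ) * ((L : ℝ) * ∑ j : ZMod L, (g (j + 1) - g j) ^ 2) := by
          rw [Finset.sum_const, Finset.card_univ, ZMod.card, nsmul_eq_mul]
  have hfnn : (0 : ℝ) ≤ ∑ i : ZMod L, (f i - f (i + 1)) ^ 2 :=
    Finset.sum_nonneg fun _ _ => sq_nonneg _
  calc (∑ i : ZMod L, (f i - f (i + 1)) * (g (i + 1) - g 0)) ^ 2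
      ≤ (∑ i : ZMod L, (f i - f (i + 1)) ^ 2) * ∑ i : ZMod L, (g (i + 1) - g 0) ^ 2 := hCS
    _ ≤ (∑ i : ZMod L, (f i - f (i + 1)) ^ 2) *
        ((L : ℝ) * ((L : ℝ) * ∑ j : ZMod L, (g (j + 1) - g j) ^ 2)) :=
          mul_le_mul_of_nonneg_left hg hfnn
    _ = (L : ℝ) ^ 2 * (∑ i : ZMod L, (f (i+1) - f i) ^ 2) *
        (∑ i : ZMod L, (g (i+1) - g i) ^ 2) := by rw [hf]; ring
end

section
/- Let H be a real symmetric d×d matrix with orthonormal eigenvectors u₁, …, u_d and eigenvalues −λ₁, λ₂, …, λ_d, where λ₁, …, λ_d > 0. Let α > 0 and v ∈ ℝᵈ with coordinates v_k = v·u_k satisfying v₁ > 0 and v₁²/λ₁ = ∑_{k=2}^d v_k²/λ_k + 1/α. Let (ε_N)_{N≥1} be positive reals with N ε_N² → ∞ and N ε_N³ → 0, and let Φ(t) = ∫_{−∞}^t (2π)^{−1/2} e^{−y²/2} dy be the standard normal distribution function. Then for every r > 0 there exist constants c₀ > 0, C₀ < ∞ and N₀ such that for all N ≥ N₀: (i)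 every x ∈ ℝᵈ with |x·u₁ − ε_N| ≤ r/N satisfies exp(−(N/2) xᵀHx) · (1 − Φ(√(αN)(x·v)))² ≤ C₀ e^{−c₀ N ε_N²}; and (ii) every x ∈ ℝᵈ with |x·u₁ + ε_N| ≤ r/N satisfies exp(−(N/2) xᵀHx) · Φ(√(αN)(x·v))² ≤ C₀ e^{−c₀ N ε_N²}. -/
open Matrix Filter MeasureTheory

/-- The standard normal distribution function `Φ(t) = ∫_{-∞}^t (2π)^{-1/2} e^{-y²/2} dy`. -/
noncomputable def stdGaussianCDF (t : ℝ) : ℝ :=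
  ∫ y in Set.Iic t, (2 * Real.pi) ^ (-(1 : ℝ) / 2) * Real.exp (-y ^ 2 / 2)



lemma gpdf_int : Integrable (fun y : ℝ => (2 * Real.pi) ^ (-(1 : ℝ) / 2) * Real.exp (-y ^ 2 / 2)) := by
  have h := (integrable_exp_neg_mul_sq (by norm_num : (0:ℝ) < 1/2)).const_mul
    ((2 * Real.pi) ^ (-(1 : ℝ) / 2))
  convert h using 2 with y
  ring_nf

lemma gpdf_total : ∫ y : ℝ, (2 * Real.pi) ^ (-(1 : ℝ) / 2) * Real.exp (-y ^ 2 / 2) = 1 := by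
  rw [integral_const_mul]
  have : ∀ y : ℝ, Real.exp (-y ^ 2 / 2) = Real.exp (-(1/2) * y ^ 2) := by intro y; ring_nf
  simp_rw [this, integral_gaussian]
  have h2 : (0:ℝ) < 2 * Real.pi := by positivity
  rw [show Real.pi / (1/2) = 2 * Real.pi by ring, show (-1 : ℝ)/2 = -(1/2 : ℝ) by norm_num,
    Real.rpow_neg h2.le, ← Real.sqrt_eq_rpow]
  rw [inv_mul_eq_div, div_eq_one_iff_eq (by positivity)]

lemma Phi_nonneg (t : ℝ) : 0 ≤ stdGaussianCDF t := by
  apply setIntegral_nonneg measurableSet_Iic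
  intro y _; positivity

lemma Phi_le_one (t : ℝ) : stdGaussianCDF t ≤ 1 := by
  rw [← gpdf_total]
  exact setIntegral_le_integral gpdf_int (Filter.Eventually.of_forall fun y => by positivity)

lemma one_sub_Phi (t : ℝ) : 1 - stdGaussianCDF t
    = ∫ y in Set.Ioi t, (2 * Real.pi) ^ (-(1 : ℝ) / 2) * Real.exp (-y ^ 2 / 2) := by
  have := intervalIntegral.integral_Iic_add_Ioi (b := t) gpdf_int.integrableOn gpdf_int.integrableOn
  rw [gpdf_total] at this
  unfold stdGaussianCDF
  linarith

lemma Phi_neg (t : ℝ) : stdGaussianCDF (-t) = 1 - stdGaussianCDF t := by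
  rw [one_sub_Phi]
  unfold stdGaussianCDF
  rw [← integral_comp_neg_Ioi]
  congr 1; ext y; ring_nf

lemma tail_bound {t : ℝ} (ht : 0 ≤ t) : 1 - stdGaussianCDF t ≤ Real.exp (-t^2/2) := by
  rw [one_sub_Phi]
  have key : ∀ y ∈ Set.Ioi t, (2 * Real.pi) ^ (-(1 : ℝ) / 2) * Real.exp (-y ^ 2 / 2)
      ≤ Real.exp (-t^2/2) * ((2 * Real.pi) ^ (-(1 : ℝ) / 2) * Real.exp (-(y - t) ^ 2 / 2)) := by
    intro y hy
    simp only [Set.mem_Ioi] at hy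
    rw [mul_left_comm]
    apply mul_le_mul_of_nonneg_left _ (by positivity)
    rw [← Real.exp_add, Real.exp_le_exp]
    nlinarith [mul_nonneg ht (le_of_lt (sub_pos.mpr hy))]
  have hint2 : Integrable (fun y : ℝ => Real.exp (-t^2/2) *
      ((2 * Real.pi) ^ (-(1 : ℝ) / 2) * Real.exp (-(y - t) ^ 2 / 2))) := by
    have : Integrable (fun y : ℝ => (2 * Real.pi) ^ (-(1 : ℝ) / 2) * Real.exp (-(y - t) ^ 2 / 2)) := by
      have := gpdf_int.comp_sub_right t
      simpa using this
    exact this.const_mul _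
  calc (∫ y in Set.Ioi t, (2 * Real.pi) ^ (-(1 : ℝ) / 2) * Real.exp (-y ^ 2 / 2))
      ≤ ∫ y in Set.Ioi t, Real.exp (-t^2/2) *
        ((2 * Real.pi) ^ (-(1 : ℝ) / 2) * Real.exp (-(y - t) ^ 2 / 2)) := by
        apply setIntegral_mono_on gpdf_int.integrableOn hint2.integrableOn measurableSet_Ioi key
    _ ≤ ∫ y : ℝ, Real.exp (-t^2/2) *
        ((2 * Real.pi) ^ (-(1 : ℝ) / 2) * Real.exp (-(y - t) ^ 2 / 2)) :=
        setIntegral_le_integral hint2 (Filter.Eventually.of_forall fun y => by positivity)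
    _ = Real.exp (-t^2/2) := by
        rw [integral_const_mul,
          integral_sub_right_eq_self (μ := volume)
            (fun y => (2 * Real.pi) ^ (-(1 : ℝ) / 2) * Real.exp (-y ^ 2 / 2)) t,
          gpdf_total, mul_one]

lemma one_sub_Phi_sq (t : ℝ) : (1 - stdGaussianCDF t)^2 ≤ Real.exp (-(max t 0)^2) := by
  rcases le_or_gt 0 t with h | h
  · have h1 := tail_bound h
    have h2 : 0 ≤ 1 - stdGaussianCDF t := by linarith [Phi_le_one t]
    rw [max_eq_left h]
    calc (1 - stdGaussianCDF t)^2 ≤ (Real.exp (-t^2/2))^2 := by nlinarith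
      _ = Real.exp (-t^2) := by rw [← Real.exp_nat_mul]; ring_nf
  · rw [max_eq_right h.le]
    have h2 : 0 ≤ 1 - stdGaussianCDF t := by linarith [Phi_le_one t]
    have h3 : 1 - stdGaussianCDF t ≤ 1 := by linarith [Phi_nonneg t]
    calc (1 - stdGaussianCDF t)^2 ≤ 1^2 := by nlinarith
      _ ≤ Real.exp (-(0:ℝ)^2) := by simp


lemma ortho_sum {d : ℕ} (u : Fin d → Fin d → ℝ)
    (horth : ∀ i j, u i ⬝ᵥ u j = if i = j then (1:ℝ) else 0) (i j : Fin d) :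
    ∑ k, u k i * u k j = if i = j then (1:ℝ) else 0 := by
  have hU : (Matrix.of u) * (Matrix.of u)ᵀ = 1 := by
    ext a b
    simpa [Matrix.mul_apply, dotProduct, Matrix.one_apply] using horth a b
  have hU' : (Matrix.of u)ᵀ * (Matrix.of u) = 1 := mul_eq_one_comm.mp hU
  have h2 := Matrix.ext_iff.mpr hU' i j
  simpa [Matrix.mul_apply, Matrix.one_apply, Matrix.transpose_apply, mul_comm] using h2

lemma basis_decomp {d : ℕ} (u : Fin d → Fin d → ℝ)
    (horth : ∀ i j, u i ⬝ᵥ u j = if i = j then (1:ℝ) else 0) (x : Fin d → ℝ) :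
    x = ∑ k, (x ⬝ᵥ u k) • u k := by
  funext i
  rw [Finset.sum_apply]
  simp only [Pi.smul_apply, smul_eq_mul, dotProduct]
  calc x i = ∑ j, x j * (if j = i then (1:ℝ) else 0) := by simp
    _ = ∑ j, x j * ∑ k, u k j * u k i := by
        refine Finset.sum_congr rfl fun j _ => ?_
        rw [ortho_sum u horth j i]
    _ = ∑ j, ∑ k, x j * (u k j * u k i) := by simp [Finset.mul_sum]
    _ = ∑ k, ∑ j, x j * (u k j * u k i) := Finset.sum_comm
    _ = ∑ k, (∑ j, x j * u k j) * u k i := by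
        refine Finset.sum_congr rfl fun k _ => ?_
        rw [Finset.sum_mul]; exact Finset.sum_congr rfl fun j _ => by ring

lemma key_ineq (α lam0 β v0 y0 Q s : ℝ) (hα : 0 < α) (hlam : 0 < lam0) (hβ : 0 ≤ β)
    (hv0 : 0 < v0) (hrel : v0^2/lam0 = β + 1/α) (hy : 0 < y0) (hQ : 0 ≤ Q)
    (hs : s^2 ≤ β * Q) :
    lam0 * y0^2 - Q - 2*α*(max (v0*y0+s) 0)^2 ≤ -(lam0/(2*α*β+1)) * y0^2 := by
  have hD : (0:ℝ) < 2*α*β+1 := by positivity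
  have hv2 : α * v0^2 = lam0 * (α*β+1) := by
    field_simp at hrel
    nlinarith [hrel]
  set T := max (v0*y0+s) 0 with hT
  have hT0 : 0 ≤ T := le_max_right _ _
  have hmain : 2*α*(v0*y0)^2 ≤ (2*α*β+1) * (Q + 2*α*T^2) := by
    rcases le_or_gt (v0*y0+s) 0 with hc | hc
    · have hTz : T = 0 := max_eq_right hc
      rw [hTz]
      have hs2 : (v0*y0)^2 ≤ s^2 := by nlinarith [mul_pos hv0 hy]
      nlinarith [mul_le_mul_of_nonneg_left hs hα.le, mul_le_mul_of_nonneg_left hs2 hα.le]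
    · have hTe : T = v0*y0+s := max_eq_left hc.le
      rw [hTe]
      rcases hβ.eq_or_lt with hb0 | hbpos
      · have hs0 : s = 0 := by nlinarith [sq_nonneg s]
        subst hs0
        rw [← hb0]
        nlinarith [hQ]
      · have h2 : 0 ≤ β*(Q + 4*α^2*β*(v0*y0+s)^2 + 4*α*(v0*y0+s)*s) := by
          nlinarith [sq_nonneg (s + 2*α*β*(v0*y0+s)), hs]
        have h3 : 0 ≤ Q + 4*α^2*β*(v0*y0+s)^2 + 4*α*(v0*y0+s)*s :=
          nonneg_of_mul_nonneg_right h2 hbpos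
        have h4 : 2*α*s^2 ≤ 2*α*(β*Q) :=
          mul_le_mul_of_nonneg_left hs (by positivity)
        nlinarith [h3, h4]
  have hv2y : α * v0^2 * y0^2 = lam0 * (α*β+1) * y0^2 := by rw [hv2]
  rw [show -(lam0/(2*α*β+1)) * y0^2 = (-(lam0*y0^2))/(2*α*β+1) by ring, le_div_iff₀ hD]
  nlinarith [hmain, hv2y]


lemma dot_sum_right {d : ℕ} (x : Fin d → ℝ) (w : Fin d → Fin d → ℝ) :
    x ⬝ᵥ (∑ k, w k) = ∑ k, x ⬝ᵥ w k := by
  simp only [dotProduct, Finset.sum_apply, Finset.mul_sum]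
  exact Finset.sum_comm

lemma sum_dot_left {d : ℕ} (v : Fin d → ℝ) (w : Fin d → Fin d → ℝ) :
    (∑ k, w k) ⬝ᵥ v = ∑ k, w k ⬝ᵥ v := by
  simp only [dotProduct, Finset.sum_apply, Finset.sum_mul]
  exact Finset.sum_comm

set_option maxHeartbeats 1000000 in
lemma core_bound {d : ℕ} [NeZero d]
    (H : Matrix (Fin d) (Fin d) ℝ)
    (u : Fin d → Fin d → ℝ) (lam : Fin d → ℝ) (hlam : ∀ k, 0 < lam k)
    (horth : ∀ i j, u i ⬝ᵥ u j = if i = j then (1 : ℝ) else 0)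
    (heig0 : H *ᵥ u 0 = (-(lam 0)) • u 0)
    (heig : ∀ k, k ≠ 0 → H *ᵥ u k = lam k • u k)
    (α : ℝ) (hα : 0 < α) (v : Fin d → ℝ) (hv1 : 0 < v ⬝ᵥ u 0)
    (hvrel : (v ⬝ᵥ u 0) ^ 2 / lam 0 =
      ∑ k ∈ Finset.univ.erase 0, (v ⬝ᵥ u k) ^ 2 / lam k + 1 / α)
    (N : ℕ) (e : ℝ) (he : 0 < e) (x : Fin d → ℝ) (hx : e/2 ≤ x ⬝ᵥ u 0) :
    Real.exp (-(N : ℝ) / 2 * (x ⬝ᵥ (H *ᵥ x))) *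
      (1 - stdGaussianCDF (Real.sqrt (α * N) * (x ⬝ᵥ v))) ^ 2 ≤
    Real.exp (-(lam 0 / (2*α*(∑ k ∈ Finset.univ.erase 0, (v ⬝ᵥ u k) ^ 2 / lam k)+1) / 8)
      * N * e ^ 2) := by
  classical
  set β := ∑ k ∈ Finset.univ.erase 0, (v ⬝ᵥ u k) ^ 2 / lam k with hβdef
  set y0 := x ⬝ᵥ u 0 with hy0
  set v0 := v ⬝ᵥ u 0 with hv0
  set Q := ∑ k ∈ Finset.univ.erase 0, lam k * (x ⬝ᵥ u k)^2 with hQdef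
  set s := ∑ k ∈ Finset.univ.erase 0, (v ⬝ᵥ u k) * (x ⬝ᵥ u k) with hsdef
  have hβ : 0 ≤ β := Finset.sum_nonneg fun k _ => div_nonneg (sq_nonneg _) (hlam k).le
  have hQ : 0 ≤ Q := Finset.sum_nonneg fun k _ => mul_nonneg (hlam k).le (sq_nonneg _)
  have hy : 0 < y0 := lt_of_lt_of_le (by positivity) hx
  have hdec := basis_decomp u horth x
  -- quadratic form
  have hmv : H *ᵥ x = ∑ k, (x ⬝ᵥ u k) • (H *ᵥ u k) := by
    conv_lhs => rw [hdec]
    rw [show (∑ k, (x ⬝ᵥ u k) • u k) = ∑ k, ((x ⬝ᵥ u k) • u k) from rfl]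
    rw [← Matrix.mulVecLin_apply, map_sum]
    simp [Matrix.mulVecLin_apply, Matrix.mulVec_smul]
  have hquad : x ⬝ᵥ (H *ᵥ x) = -(lam 0) * y0^2 + Q := by
    rw [hmv, dot_sum_right]
    have hterm : ∀ k, x ⬝ᵥ ((x ⬝ᵥ u k) • (H *ᵥ u k))
        = (if k = 0 then -(lam 0) else lam k) * (x ⬝ᵥ u k)^2 := by
      intro k
      by_cases hk : k = 0
      · subst hk; rw [heig0]; simp [dotProduct_smul, smul_eq_mul]; ring
      · rw [heig k hk, if_neg hk]; simp [dotProduct_smul, smul_eq_mul]; ring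
    rw [Finset.sum_congr rfl fun k _ => hterm k,
      ← Finset.add_sum_erase _ _ (Finset.mem_univ 0), if_pos rfl]
    congr 1
    refine Finset.sum_congr rfl fun k hk => by rw [if_neg (Finset.ne_of_mem_erase hk)]
  -- linear form
  have hdot : x ⬝ᵥ v = v0 * y0 + s := by
    conv_lhs => rw [hdec]
    rw [sum_dot_left]
    have hterm : ∀ k, ((x ⬝ᵥ u k) • u k) ⬝ᵥ v = (v ⬝ᵥ u k) * (x ⬝ᵥ u k) := by
      intro k
      rw [smul_dotProduct, smul_eq_mul, dotProduct_comm (u k) v]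
      ring
    rw [Finset.sum_congr rfl fun k _ => hterm k,
      ← Finset.add_sum_erase _ _ (Finset.mem_univ 0)]
  -- Cauchy-Schwarz
  have hCS : s^2 ≤ β * Q := by
    have h := Finset.sum_mul_sq_le_sq_mul_sq (Finset.univ.erase 0)
      (fun k => (v ⬝ᵥ u k) / Real.sqrt (lam k)) (fun k => Real.sqrt (lam k) * (x ⬝ᵥ u k))
    have e1 : ∀ k, (v ⬝ᵥ u k) / Real.sqrt (lam k) * (Real.sqrt (lam k) * (x ⬝ᵥ u k))
        = (v ⬝ᵥ u k) * (x ⬝ᵥ u k) := by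
      intro k
      have hne : Real.sqrt (lam k) ≠ 0 := (Real.sqrt_pos.mpr (hlam k)).ne'
      field_simp
    have e2 : ∀ k, ((v ⬝ᵥ u k) / Real.sqrt (lam k))^2 = (v ⬝ᵥ u k)^2 / lam k := by
      intro k
      rw [div_pow, Real.sq_sqrt (hlam k).le]
    have e3 : ∀ k, (Real.sqrt (lam k) * (x ⬝ᵥ u k))^2 = lam k * (x ⬝ᵥ u k)^2 := by
      intro k
      rw [mul_pow, Real.sq_sqrt (hlam k).le]
    rw [Finset.sum_congr rfl fun k _ => e1 k, Finset.sum_congr rfl fun k _ => e2 k,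
      Finset.sum_congr rfl fun k _ => e3 k] at h
    exact h
  have hkey := key_ineq α (lam 0) β v0 y0 Q s hα (hlam 0) hβ hv1 hvrel hy hQ hCS
  -- Gaussian bound
  have hΦ := one_sub_Phi_sq (Real.sqrt (α * N) * (x ⬝ᵥ v))
  have hαN : (0:ℝ) ≤ α * N := by positivity
  have hmax : (max (Real.sqrt (α * N) * (x ⬝ᵥ v)) 0)^2 = α * N * (max (x ⬝ᵥ v) 0)^2 := by
    have h1 : max (Real.sqrt (α * N) * (x ⬝ᵥ v)) 0 = Real.sqrt (α * N) * max (x ⬝ᵥ v) 0 := by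
      rw [mul_max_of_nonneg _ _ (Real.sqrt_nonneg (α * (N:ℝ))), mul_zero]
    rw [h1, mul_pow, Real.sq_sqrt hαN]
  have hNn : (0:ℝ) ≤ (N:ℝ) := Nat.cast_nonneg N
  have hy2 : e^2/4 ≤ y0^2 := by nlinarith
  calc Real.exp (-(N : ℝ) / 2 * (x ⬝ᵥ (H *ᵥ x))) *
        (1 - stdGaussianCDF (Real.sqrt (α * N) * (x ⬝ᵥ v))) ^ 2
      ≤ Real.exp (-(N : ℝ) / 2 * (x ⬝ᵥ (H *ᵥ x))) *
        Real.exp (-(max (Real.sqrt (α * N) * (x ⬝ᵥ v)) 0)^2) :=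
        mul_le_mul_of_nonneg_left hΦ (Real.exp_pos _).le
    _ = Real.exp (-(N : ℝ) / 2 * (x ⬝ᵥ (H *ᵥ x)) + -(α * N * (max (x ⬝ᵥ v) 0)^2)) := by
        rw [← Real.exp_add, hmax]
    _ ≤ Real.exp (-(lam 0 / (2*α*β+1) / 8) * N * e ^ 2) := by
        rw [Real.exp_le_exp, hquad, hdot]
        have hkN := mul_le_mul_of_nonneg_left hkey (by positivity : (0:ℝ) ≤ (N:ℝ)/2)
        have hpos : 0 ≤ lam 0 / (2*α*β+1) * (N:ℝ) * (y0^2 - e^2/4) := by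
          have hD : (0:ℝ) < 2*α*β+1 := by nlinarith [mul_nonneg hα.le hβ]
          have h0 : 0 ≤ lam 0 / (2*α*β+1) := div_nonneg (hlam 0).le hD.le
          exact mul_nonneg (mul_nonneg h0 hNn) (by linarith)
        linarith [hkN, hpos]

/-- Quantitative core of the paper's Lemma 3.7 (display (3.9)): on the lateral
boundary pieces `x·u₁ = ±ε_N + O(1/N)`, the Gaussian approximation
`V_N(x) = Φ(√(αN) x·v)` of the equilibrium potential is exponentially close to
`1` (resp. `0`), weighted by `e^{-(N/2) xᵀHx}`. -/
theorem equilibrium_potential_boundary_estimate {d : ℕ} [NeZero d]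
    (H : Matrix (Fin d) (Fin d) ℝ) (hH : H.IsSymm)
    (u : Fin d → Fin d → ℝ) (lam : Fin d → ℝ) (hlam : ∀ k, 0 < lam k)
    (horth : ∀ i j, u i ⬝ᵥ u j = if i = j then (1 : ℝ) else 0)
    (heig0 : H *ᵥ u 0 = (-(lam 0)) • u 0)
    (heig : ∀ k, k ≠ 0 → H *ᵥ u k = lam k • u k)
    (α : ℝ) (hα : 0 < α) (v : Fin d → ℝ) (hv1 : 0 < v ⬝ᵥ u 0)
    (hvrel : (v ⬝ᵥ u 0) ^ 2 / lam 0 =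
      ∑ k ∈ Finset.univ.erase 0, (v ⬝ᵥ u k) ^ 2 / lam k + 1 / α)
    (ε : ℕ → ℝ) (hε : ∀ N, 0 < ε N)
    (h1 : Tendsto (fun N : ℕ => (N : ℝ) * ε N ^ 2) atTop atTop)
    (h2 : Tendsto (fun N : ℕ => (N : ℝ) * ε N ^ 3) atTop (nhds 0)) :
    ∀ r : ℝ, 0 < r → ∃ (c₀ C₀ : ℝ) (N₀ : ℕ), 0 < c₀ ∧
      ∀ N : ℕ, N₀ ≤ N →
        (∀ x : Fin d → ℝ, |x ⬝ᵥ u 0 - ε N| ≤ r / N →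
          Real.exp (-(N : ℝ) / 2 * (x ⬝ᵥ (H *ᵥ x))) *
            (1 - stdGaussianCDF (Real.sqrt (α * N) * (x ⬝ᵥ v))) ^ 2 ≤
          C₀ * Real.exp (-c₀ * N * ε N ^ 2)) ∧
        (∀ x : Fin d → ℝ, |x ⬝ᵥ u 0 + ε N| ≤ r / N →
          Real.exp (-(N : ℝ) / 2 * (x ⬝ᵥ (H *ᵥ x))) *
            (stdGaussianCDF (Real.sqrt (α * N) * (x ⬝ᵥ v))) ^ 2 ≤
          C₀ * Real.exp (-c₀ * N * ε N ^ 2)) := by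

  intro r hr
  have hβ0 : (0:ℝ) ≤ ∑ k ∈ Finset.univ.erase 0, (v ⬝ᵥ u k)^2 / lam k :=
    Finset.sum_nonneg fun k _ => div_nonneg (sq_nonneg _) (hlam k).le
  have hev : ∀ᶠ N : ℕ in atTop, max 1 (2*r) ≤ (N:ℝ) * ε N^2 ∧ (N:ℝ) * ε N^3 < 1 :=
    (h1.eventually_ge_atTop _).and (h2.eventually_lt_const one_pos)
  obtain ⟨N₀, hN₀⟩ := Filter.eventually_atTop.mp hev
  have hc₁ : 0 < lam 0 / (2*α*(∑ k ∈ Finset.univ.erase 0, (v ⬝ᵥ u k)^2/lam k)+1) / 8 :=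
    div_pos (div_pos (hlam 0) (by nlinarith [mul_nonneg hα.le hβ0])) (by norm_num)
  refine ⟨lam 0 / (2*α*(∑ k ∈ Finset.univ.erase 0, (v ⬝ᵥ u k)^2/lam k)+1) / 8, 1, N₀,
    hc₁, fun N hN => ?_⟩
  obtain ⟨hA, hB⟩ := hN₀ N hN
  have hεN := hε N
  have h1' : (1:ℝ) ≤ N * ε N^2 := le_trans (le_max_left _ _) hA
  have h2r : 2*r ≤ N * ε N^2 := le_trans (le_max_right _ _) hA
  have hNpos : (0:ℝ) < N := by nlinarith [sq_nonneg (ε N)]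
  have hεle1 : ε N ≤ 1 := by nlinarith [mul_pos hNpos (mul_pos hεN hεN)]
  have hrN : r/(N:ℝ) ≤ ε N/2 := by
    rw [div_le_div_iff₀ hNpos two_pos]
    nlinarith [mul_pos hNpos hεN]
  constructor
  · intro x hx
    have hx' : ε N/2 ≤ x ⬝ᵥ u 0 := by
      have h := abs_le.mp hx
      linarith [h.1]
    have hcore := core_bound H u lam hlam horth heig0 heig α hα v hv1 hvrel N (ε N) hεN x hx'
    rw [one_mul]
    have : -(lam 0 / (2*α*(∑ k ∈ Finset.univ.erase 0, (v ⬝ᵥ u k)^2/lam k)+1) / 8) * N * ε N^2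
        = -(lam 0 / (2*α*(∑ k ∈ Finset.univ.erase 0, (v ⬝ᵥ u k)^2/lam k)+1) / 8) * N * ε N^2 := rfl
    exact hcore
  · intro x hx
    have hx' : ε N/2 ≤ (-x) ⬝ᵥ u 0 := by
      rw [neg_dotProduct]
      have h := abs_le.mp hx
      linarith [h.2]
    have hcore := core_bound H u lam hlam horth heig0 heig α hα v hv1 hvrel N (ε N) hεN (-x) hx'
    rw [Matrix.mulVec_neg, dotProduct_neg, neg_dotProduct, neg_neg, neg_dotProduct, mul_neg,
      Phi_neg, sub_sub_cancel] at hcore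
    rw [one_mul]
    exact hcore
end

section
/- Let H be a real symmetric d×d matrix with orthonormal eigenvectors u₁, …, u_d and eigenvalues −λ₁, λ₂, …, λ_d, where λ₁, …, λ_d > 0. Let α > 0 and v ∈ ℝᵈ with coordinates v_k = v·u_k satisfying v₁ > 0 and v₁²/λ₁ = ∑_{k=2}^d v_k²/λ_k + 1/α. Then: (i) there exists δ ∈ (0, v₁) such that (v₁²/λ₁ − 1/α)(λ₁ + δ) < (v₁ − δ)²; and (ii) for any such δ, every x ∈ ℝᵈ with x·u₁ = 1 satisfies x·v ≥ δ or xᵀHx ≥ δ. -/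
open Matrix

set_option maxHeartbeats 1600000 in
/-- Geometric dichotomy from the proof of the paper's Lemma 3.7: there is
`δ ∈ (0, v₁)` with `(v₁²/λ₁ - 1/α)(λ₁ + δ) < (v₁ - δ)²`, and for any such `δ`,
every `x` with `x·u₁ = 1` satisfies `x·v ≥ δ` or `xᵀHx ≥ δ`. -/
theorem saddle_hyperplane_dichotomy {d : ℕ} [NeZero d]
    (H : Matrix (Fin d) (Fin d) ℝ) (hH : H.IsSymm)
    (u : Fin d → Fin d → ℝ) (lam : Fin d → ℝ) (hlam : ∀ k, 0 < lam k)
    (horth : ∀ i j, u i ⬝ᵥ u j = if i = j then (1 : ℝ) else 0)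
    (heig0 : H *ᵥ u 0 = (-(lam 0)) • u 0)
    (heig : ∀ k, k ≠ 0 → H *ᵥ u k = lam k • u k)
    (α : ℝ) (hα : 0 < α) (v : Fin d → ℝ) (hv1 : 0 < v ⬝ᵥ u 0)
    (hvrel : (v ⬝ᵥ u 0) ^ 2 / lam 0 =
      ∑ k ∈ Finset.univ.erase 0, (v ⬝ᵥ u k) ^ 2 / lam k + 1 / α) :
    (∃ δ : ℝ, 0 < δ ∧ δ < v ⬝ᵥ u 0 ∧
      ((v ⬝ᵥ u 0) ^ 2 / lam 0 - 1 / α) * (lam 0 + δ) < (v ⬝ᵥ u 0 - δ) ^ 2) ∧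
    ∀ δ : ℝ, 0 < δ → δ < v ⬝ᵥ u 0 →
      ((v ⬝ᵥ u 0) ^ 2 / lam 0 - 1 / α) * (lam 0 + δ) < (v ⬝ᵥ u 0 - δ) ^ 2 →
      ∀ x : Fin d → ℝ, x ⬝ᵥ u 0 = 1 →
        δ ≤ x ⬝ᵥ v ∨ δ ≤ x ⬝ᵥ (H *ᵥ x) := by
  set v1 := v ⬝ᵥ u 0 with hv1def
  set c := ∑ k ∈ Finset.univ.erase 0, (v ⬝ᵥ u k) ^ 2 / lam k with hcdef
  have hc0 : 0 ≤ c :=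
    Finset.sum_nonneg fun k _ => div_nonneg (sq_nonneg _) (hlam k).le
  have hcrel : v1 ^ 2 / lam 0 - 1 / α = c := by rw [hvrel]; ring
  have hclam : c * lam 0 = v1 ^ 2 - lam 0 / α := by
    have h0 : (lam 0) ≠ 0 := (hlam 0).ne'
    field_simp at hcrel ⊢
    nlinarith [hcrel]
  constructor
  · -- existence of δ
    set δ := min (v1 / 2) (lam 0 / (α * (c + 2 * v1))) with hδdef
    have hpos2 : 0 < α * (c + 2 * v1) := by positivity
    have hδ0 : 0 < δ := lt_min (by linarith) (div_pos (hlam 0) hpos2)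
    have hδv : δ < v1 := lt_of_le_of_lt (min_le_left _ _) (by linarith)
    refine ⟨δ, hδ0, hδv, ?_⟩
    rw [hcrel]
    have hle : δ ≤ lam 0 / (α * (c + 2 * v1)) := min_le_right _ _
    have h2 : δ * (α * (c + 2 * v1)) ≤ lam 0 := by
      rw [div_eq_mul_inv] at hle
      calc δ * (α * (c + 2 * v1)) ≤ lam 0 * (α * (c + 2 * v1))⁻¹ * (α * (c + 2 * v1)) := by
            apply mul_le_mul_of_nonneg_right hle hpos2.le
        _ = lam 0 := by field_simp
    have h3 : (c + 2 * v1) * δ ≤ lam 0 / α := by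
      rw [le_div_iff₀ hα]; nlinarith
    nlinarith [sq_nonneg δ, hδ0, hclam, h3, hα, mul_pos hδ0 hδ0]
  · -- the dichotomy
    intro δ hδ0 hδv hineq x hx
    rw [hcrel] at hineq
    by_contra hcon
    push_neg at hcon
    obtain ⟨h1, h2⟩ := hcon
    -- completeness of the orthonormal basis
    have key : ∀ a b : Fin d → ℝ, a ⬝ᵥ b = ∑ k, (u k ⬝ᵥ a) * (u k ⬝ᵥ b) := by
      intro a b
      have hU : (Matrix.of u) * (Matrix.of u)ᵀ = 1 := by
        ext i j
        simpa [Matrix.mul_apply, Matrix.one_apply, dotProduct] using horth i j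
      have hU2 : (Matrix.of u)ᵀ * (Matrix.of u) = 1 := mul_eq_one_comm.mp hU
      calc a ⬝ᵥ b = a ⬝ᵥ (((Matrix.of u)ᵀ * (Matrix.of u)) *ᵥ b) := by
            rw [hU2, Matrix.one_mulVec]
        _ = a ⬝ᵥ ((Matrix.of u)ᵀ *ᵥ ((Matrix.of u) *ᵥ b)) := by
            rw [Matrix.mulVec_mulVec]
        _ = ((Matrix.of u) *ᵥ a) ⬝ᵥ ((Matrix.of u) *ᵥ b) := by
            rw [Matrix.dotProduct_mulVec, Matrix.vecMul_transpose]
        _ = ∑ k, (u k ⬝ᵥ a) * (u k ⬝ᵥ b) := rfl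
    have split : ∀ f : Fin d → ℝ,
        ∑ k, f k = f 0 + ∑ k ∈ Finset.univ.erase 0, f k := fun f =>
      (Finset.add_sum_erase _ f (Finset.mem_univ 0)).symm
    have h00 : u 0 ⬝ᵥ x = 1 := by rw [dotProduct_comm]; exact hx
    have h01 : u 0 ⬝ᵥ v = v1 := by rw [dotProduct_comm]
    -- eigenvalue action
    have hHx : ∀ k, u k ⬝ᵥ (H *ᵥ x) =
        (if k = 0 then -(lam 0) else lam k) * (u k ⬝ᵥ x) := by
      intro k
      have hsym : Matrix.vecMul (u k) H = H *ᵥ u k := by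
        rw [← hH.eq, Matrix.mulVec_transpose, hH.eq]
      rw [Matrix.dotProduct_mulVec, hsym]
      by_cases hk : k = 0
      · subst hk
        rw [heig0, smul_dotProduct, if_pos rfl]
        simp
      · rw [heig k hk, smul_dotProduct, if_neg hk]
        simp
    -- decompositions
    have hxv : x ⬝ᵥ v = v1 + ∑ k ∈ Finset.univ.erase 0, (u k ⬝ᵥ x) * (u k ⬝ᵥ v) := by
      rw [key x v, split fun k => (u k ⬝ᵥ x) * (u k ⬝ᵥ v), h00, h01, one_mul]
    have hxHx : x ⬝ᵥ (H *ᵥ x) =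
        -(lam 0) + ∑ k ∈ Finset.univ.erase 0, lam k * (u k ⬝ᵥ x) ^ 2 := by
      rw [key x (H *ᵥ x), split fun k => (u k ⬝ᵥ x) * (u k ⬝ᵥ (H *ᵥ x))]
      have e : ∀ k ∈ Finset.univ.erase 0,
          (u k ⬝ᵥ x) * (u k ⬝ᵥ (H *ᵥ x)) = lam k * (u k ⬝ᵥ x) ^ 2 := by
        intro k hk
        rw [hHx k, if_neg (Finset.mem_erase.mp hk).1]
        ring
      rw [Finset.sum_congr rfl e, hHx 0, if_pos rfl, h00]
      ring
    -- Cauchy-Schwarz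
    have hCS : (∑ k ∈ Finset.univ.erase 0, (u k ⬝ᵥ x) * (u k ⬝ᵥ v)) ^ 2 ≤
        (∑ k ∈ Finset.univ.erase 0, lam k * (u k ⬝ᵥ x) ^ 2) * c := by
      have hmain := Finset.sum_mul_sq_le_sq_mul_sq (Finset.univ.erase 0)
        (fun k => Real.sqrt (lam k) * (u k ⬝ᵥ x))
        (fun k => (u k ⬝ᵥ v) / Real.sqrt (lam k))
      have e1 : ∀ k ∈ Finset.univ.erase 0,
          (Real.sqrt (lam k) * (u k ⬝ᵥ x)) * ((u k ⬝ᵥ v) / Real.sqrt (lam k)) =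
            (u k ⬝ᵥ x) * (u k ⬝ᵥ v) := by
        intro k _
        have hs : Real.sqrt (lam k) ≠ 0 := (Real.sqrt_pos.mpr (hlam k)).ne'
        field_simp
      have e2 : ∀ k ∈ Finset.univ.erase 0,
          (Real.sqrt (lam k) * (u k ⬝ᵥ x)) ^ 2 = lam k * (u k ⬝ᵥ x) ^ 2 := by
        intro k _
        rw [mul_pow, Real.sq_sqrt (hlam k).le]
      have e3 : ∀ k ∈ Finset.univ.erase 0,
          ((u k ⬝ᵥ v) / Real.sqrt (lam k)) ^ 2 = (v ⬝ᵥ u k) ^ 2 / lam k := by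
        intro k _
        rw [div_pow, Real.sq_sqrt (hlam k).le, dotProduct_comm]
      rw [Finset.sum_congr rfl e1, Finset.sum_congr rfl e2, Finset.sum_congr rfl e3]
        at hmain
      exact hmain
    -- assemble the contradiction
    set B := ∑ k ∈ Finset.univ.erase 0, (u k ⬝ᵥ x) * (u k ⬝ᵥ v) with hBdef
    set A := ∑ k ∈ Finset.univ.erase 0, lam k * (u k ⬝ᵥ x) ^ 2 with hAdef
    have hA0 : 0 ≤ A :=
      Finset.sum_nonneg fun k _ => mul_nonneg (hlam k).le (sq_nonneg _)
    have hB : B < δ - v1 := by rw [hxv] at h1; linarith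
    have hA : A < δ + lam 0 := by rw [hxHx] at h2; linarith
    have hBneg : B < 0 := by linarith
    have hBsq : (v1 - δ) ^ 2 < B ^ 2 := by nlinarith
    have hAc : A * c ≤ (δ + lam 0) * c := mul_le_mul_of_nonneg_right hA.le hc0
    nlinarith [hCS, hBsq, hineq, hAc]
end

section
/- Let V be a finite set, let c : V × V → ℝ be symmetric and nonnegative (c(x,y) = c(y,x) ≥ 0), and let φ : V × V → ℝ be antisymmetric (φ(x,y) = −φ(y,x)) with φ(x,y) = 0 whenever c(x,y) = 0. Let E ⊆ V. Then, with the convention that a term with zero denominator and zero numerator is 0, (1/2) ∑_{x ∉ E} ∑_{y ∉ E} φ(x,y)²/c(x,y) + ∑_{x ∉ E} (∑_{z ∈ E} φ(x,z))² / (∑_{z ∈ E} c(x,z)) ≤ (1/2) ∑_{x ∈ V} ∑_{y ∈ V} φ(x,y)²/c(x,y). -/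
lemma pointwise_aux {V : Type*} [Fintype V] [DecidableEq V]
    (c φ : V → V → ℝ) (hc_nonneg : ∀ x y, 0 ≤ c x y)
    (hφ_supp : ∀ x y, c x y = 0 → φ x y = 0) (E : Finset V) (x : V) :
    (∑ z ∈ E, φ x z) ^ 2 / (∑ z ∈ E, c x z) ≤ ∑ z ∈ E, φ x z ^ 2 / c x z := by
  classical
  set E' := E.filter (fun z => 0 < c x z) with hE'
  have h1 : ∑ z ∈ E, φ x z = ∑ z ∈ E', φ x z := by
    rw [hE', Finset.sum_filter]
    refine Finset.sum_congr rfl fun z hz => ?_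
    by_cases h : 0 < c x z
    · simp [h]
    · have : c x z = 0 := le_antisymm (not_lt.1 h) (hc_nonneg x z)
      simp [h, hφ_supp x z this]
  have h2 : ∑ z ∈ E, c x z = ∑ z ∈ E', c x z := by
    rw [hE', Finset.sum_filter]
    refine Finset.sum_congr rfl fun z hz => ?_
    by_cases h : 0 < c x z
    · simp [h]
    · have : c x z = 0 := le_antisymm (not_lt.1 h) (hc_nonneg x z)
      simp [h, this]
  have h3 : ∑ z ∈ E, φ x z ^ 2 / c x z = ∑ z ∈ E', φ x z ^ 2 / c x z := by
    rw [hE', Finset.sum_filter]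
    refine Finset.sum_congr rfl fun z hz => ?_
    by_cases h : 0 < c x z
    · simp [h]
    · have : c x z = 0 := le_antisymm (not_lt.1 h) (hc_nonneg x z)
      simp [h, this]
  rw [h1, h2, h3]
  exact Finset.sq_sum_div_le_sum_sq_div E' _ (fun z hz => (Finset.mem_filter.1 hz).2)

/-- Paper's Lemma 8.1: collapsing a set `E` of the state space does not increase
the flow norm.  Here `c` is the symmetrized conductance, `φ` an antisymmetric
flow vanishing on edges of zero conductance; division by zero is zero in Lean,
in accordance with the convention `0/0 = 0`. -/
theorem collapsed_flow_norm_le {V : Type*} [Fintype V] [DecidableEq V]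
    (c φ : V → V → ℝ)
    (hc_symm : ∀ x y, c x y = c y x) (hc_nonneg : ∀ x y, 0 ≤ c x y)
    (hφ_anti : ∀ x y, φ x y = -φ y x)
    (hφ_supp : ∀ x y, c x y = 0 → φ x y = 0)
    (E : Finset V) :
    (1 / 2) * (∑ x ∈ Eᶜ, ∑ y ∈ Eᶜ, φ x y ^ 2 / c x y) +
      ∑ x ∈ Eᶜ, (∑ z ∈ E, φ x z) ^ 2 / (∑ z ∈ E, c x z) ≤
    (1 / 2) * ∑ x : V, ∑ y : V, φ x y ^ 2 / c x y := by
  classical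
  have hterm : ∀ x y, 0 ≤ φ x y ^ 2 / c x y := fun x y =>
    div_nonneg (sq_nonneg _) (hc_nonneg x y)
  -- split the full sum
  have hsplit : ∑ x : V, ∑ y : V, φ x y ^ 2 / c x y =
      (∑ x ∈ Eᶜ, ∑ y ∈ Eᶜ, φ x y ^ 2 / c x y)
      + (∑ x ∈ Eᶜ, ∑ y ∈ E, φ x y ^ 2 / c x y)
      + (∑ x ∈ E, ∑ y ∈ Eᶜ, φ x y ^ 2 / c x y)
      + (∑ x ∈ E, ∑ y ∈ E, φ x y ^ 2 / c x y) := by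
    rw [← Finset.sum_add_sum_compl E (fun x => ∑ y : V, φ x y ^ 2 / c x y)]
    have hy : ∀ x, ∑ y : V, φ x y ^ 2 / c x y =
        (∑ y ∈ E, φ x y ^ 2 / c x y) + ∑ y ∈ Eᶜ, φ x y ^ 2 / c x y := fun x =>
      (Finset.sum_add_sum_compl E _).symm
    simp only [hy, Finset.sum_add_distrib]
    ring
  have hBB : ∑ x ∈ Eᶜ, ∑ y ∈ E, φ x y ^ 2 / c x y
      = ∑ x ∈ E, ∑ y ∈ Eᶜ, φ x y ^ 2 / c x y := by
    rw [Finset.sum_comm]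
    refine Finset.sum_congr rfl fun x hx => Finset.sum_congr rfl fun y hy => ?_
    rw [hφ_anti y x, hc_symm y x, neg_pow]
    ring_nf
  have hCnonneg : 0 ≤ ∑ x ∈ E, ∑ y ∈ E, φ x y ^ 2 / c x y :=
    Finset.sum_nonneg fun x _ => Finset.sum_nonneg fun y _ => hterm x y
  have hkey : ∑ x ∈ Eᶜ, (∑ z ∈ E, φ x z) ^ 2 / (∑ z ∈ E, c x z)
      ≤ ∑ x ∈ Eᶜ, ∑ z ∈ E, φ x z ^ 2 / c x z :=
    Finset.sum_le_sum fun x _ => pointwise_aux c φ hc_nonneg hφ_supp E x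
  rw [hsplit]
  nlinarith [hkey, hCnonneg, hBB]
end
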